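/- arXiv:2504.06855 — 6 statements merged into one kernel-verified Lean document; each statement's English description precedes it below -/
import Mathlib

section
/- Let L/k be a finite Galois extension of fields and let V be a vector space over L equipped with a semilinear action of Gal(L/k), i.e. a group action of Gal(L/k) on V by additive bijections such that σ·(c • v) = σ(c) • (σ·v) for all σ ∈ Gal(L/k), c ∈ L, v ∈ V. Then the natural map V^{Gal(L/k)} ⊗_k L → V, given by w ⊗ λ ↦ λ • w, is an isomorphism of L-vector spaces, where V^{Gal(L/k)} denotes the k-subspace of vectors fixed by every element of Gal(L/k), and L acts on the tensor product through the right-hand factor. -/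
open TensorProduct

universe u v

/-- The `k`-subspace of vectors of `V` fixed by every element of `Gal(L/k)`, for a semilinear
action of `Gal(L/k)` on the `L`-vector space `V`. -/
def galoisFixedPoints (k L V : Type*) [Field k] [Field L] [Algebra k L]
    [AddCommGroup V] [Module k V] [Module L V] [IsScalarTower k L V]
    [DistribMulAction (L ≃ₐ[k] L) V]
    (hsemi : ∀ (σ : L ≃ₐ[k] L) (c : L) (v : V), σ • (c • v) = σ c • (σ • v)) :
    Submodule k V where
  carrier := {v | ∀ σ : L ≃ₐ[k] L, σ • v = v}
  add_mem' := by
    intro a b ha hb σ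
    rw [smul_add, ha σ, hb σ]
  zero_mem' := by
    intro σ
    exact smul_zero σ
  smul_mem' := by
    intro c v hv σ
    rw [← algebraMap_smul L c v, hsemi, AlgEquiv.commutes, hv σ]

/-- The natural map `V^{Gal(L/k)} ⊗[k] L → V`, `w ⊗ λ ↦ λ • w`. -/
noncomputable def galoisDescentMap (k L V : Type*) [Field k] [Field L] [Algebra k L]
    [AddCommGroup V] [Module k V] [Module L V] [IsScalarTower k L V]
    [DistribMulAction (L ≃ₐ[k] L) V]
    (hsemi : ∀ (σ : L ≃ₐ[k] L) (c : L) (v : V), σ • (c • v) = σ c • (σ • v)) :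
    (galoisFixedPoints k L V hsemi) ⊗[k] L →ₗ[k] V :=
  TensorProduct.lift <| LinearMap.mk₂ k
    (fun (w : galoisFixedPoints k L V hsemi) (c : L) => c • (w : V))
    (fun w w' c => by (try dsimp only); rw [Submodule.coe_add, smul_add])
    (fun a w c => by (try dsimp only); rw [Submodule.coe_smul]; exact (smul_comm a c _).symm)
    (fun w c c' => by (try dsimp only); rw [add_smul])
    (fun a w c => by (try dsimp only); rw [smul_assoc])


open Module
open scoped Classical

set_option maxHeartbeats 1000000


/-- Fixed vectors that are `k`-linearly independent stay `L`-linearly independent. -/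
theorem galois_li_aux (k L : Type*) [Field k] [Field L] [Algebra k L]
    [FiniteDimensional k L] [IsGalois k L]
    (V : Type*) [AddCommGroup V] [Module k V] [Module L V] [IsScalarTower k L V]
    [DistribMulAction (L ≃ₐ[k] L) V]
    (hsemi : ∀ (σ : L ≃ₐ[k] L) (c : L) (v : V), σ • (c • v) = σ c • (σ • v))
    {ι : Type*} {w : ι → V} (hfix : ∀ i (σ : L ≃ₐ[k] L), σ • w i = w i)
    (hw : LinearIndependent k w) : LinearIndependent L w := by
  classical
  rw [linearIndependent_iff'] at hw ⊢
  -- strong induction on the cardinality of s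
  suffices H : ∀ n (s : Finset ι) (g : ι → L), s.card = n →
      (∑ i ∈ s, g i • w i) = 0 → ∀ i ∈ s, g i = 0 by
    intro s g hg i hi; exact H s.card s g rfl hg i hi
  intro n
  induction n using Nat.strong_induction_on with
  | _ n IH =>
    intro s g hcard hsum
    by_contra hcon
    push_neg at hcon
    obtain ⟨i0, hi0s, hi0⟩ := hcon
    set g' : ι → L := fun i => (g i0)⁻¹ * g i with hg'
    have hg'i0 : g' i0 = 1 := inv_mul_cancel₀ hi0
    have hsum' : (∑ i ∈ s, g' i • w i) = 0 := by
      have : (∑ i ∈ s, g' i • w i) = (g i0)⁻¹ • ∑ i ∈ s, g i • w i := by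
        rw [Finset.smul_sum]
        refine Finset.sum_congr rfl fun i _ => ?_
        rw [hg', smul_smul]
      rw [this, hsum, smul_zero]
    -- every g' i is fixed by every σ
    have hfixed : ∀ i ∈ s, ∀ σ : L ≃ₐ[k] L, σ (g' i) = g' i := by
      intro i his σ
      have hsig : (∑ j ∈ s, (σ (g' j) - g' j) • w j) = 0 := by
        have h1 : (∑ j ∈ s, σ (g' j) • w j) = 0 := by
          have : σ • (∑ j ∈ s, g' j • w j) = ∑ j ∈ s, σ (g' j) • w j := by
            rw [Finset.smul_sum]
            refine Finset.sum_congr rfl fun j _ => ?_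
            rw [hsemi, hfix]
          rw [← this, hsum', smul_zero]
        simp only [sub_smul, Finset.sum_sub_distrib, h1, hsum', sub_zero]
      have herase : (∑ j ∈ s.erase i0, (σ (g' j) - g' j) • w j) = 0 := by
        rw [Finset.sum_erase _ (by rw [hg'i0, map_one, sub_self, zero_smul]), hsig]
      have := IH (s.erase i0).card
        (by rw [← hcard]; exact Finset.card_erase_lt_of_mem hi0s)
        (s.erase i0) _ rfl herase
      by_cases hii : i = i0
      · rw [hii, hg'i0, map_one]
      · have := this i (Finset.mem_erase.mpr ⟨hii, his⟩)
        exact sub_eq_zero.mp this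
    -- hence each g' i is in the base field
    have hbot : ∀ i ∈ s, ∃ a : k, algebraMap k L a = g' i := by
      intro i his
      have : g' i ∈ IntermediateField.fixedField (⊤ : Subgroup (L ≃ₐ[k] L)) := by
        rintro ⟨σ, -⟩; exact hfixed i his σ
      have htfae := (IsGalois.tfae (F := k) (E := L)).out 0 1
      rw [htfae.mp inferInstance] at this
      exact IntermediateField.mem_bot.mp this
    set a : ι → k := fun i => if h : ∃ a : k, algebraMap k L a = g' i then h.choose else 0
      with ha
    have hag : ∀ i ∈ s, algebraMap k L (a i) = g' i := by
      intro i his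
      have h := hbot i his
      simp only [ha, dif_pos h]
      exact h.choose_spec
    have hsumk : (∑ i ∈ s, a i • w i) = 0 := by
      rw [← hsum']
      refine Finset.sum_congr rfl fun i his => ?_
      rw [← hag i his, algebraMap_smul]
    have := hw s a hsumk i0 hi0s
    rw [← hag i0 hi0s, this, map_zero] at hg'i0
    exact one_ne_zero hg'i0.symm


/-- For the trace-dual bases of a Galois extension, `∑ i, b' i * σ (b i)` is `1` for
`σ = 1` and `0` otherwise. -/
theorem galois_dual_basis_aux (k L : Type*) [Field k] [Field L] [Algebra k L]
    [FiniteDimensional k L] [IsGalois k L] :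
    ∃ (ι : Type) (_ : Fintype ι) (b b' : ι → L),
      (∀ σ : L ≃ₐ[k] L, (∑ i, b' i * σ (b i)) = if σ = 1 then 1 else 0) := by
  classical
  let b : Basis (Fin (finrank k L)) k L := finBasis k L
  have hB := traceForm_nondegenerate k L
  let b' : Basis (Fin (finrank k L)) k L := (Algebra.traceForm k L).dualBasis hB b
  refine ⟨Fin (finrank k L), inferInstance, b, b', fun σ => ?_⟩
  -- the key identity: for all x, ∑ σ, (∑ i, b' i * σ (b i)) * σ x = x
  have key : ∀ x : L, (∑ τ : L ≃ₐ[k] L, (∑ i, b' i * τ (b i)) * τ x) = x := by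
    intro x
    have : (∑ τ : L ≃ₐ[k] L, (∑ i, b' i * τ (b i)) * τ x)
        = ∑ i, b' i * ∑ τ : L ≃ₐ[k] L, τ (b i * x) := by
      calc (∑ τ : L ≃ₐ[k] L, (∑ i, b' i * τ (b i)) * τ x)
          = ∑ τ : L ≃ₐ[k] L, ∑ i, b' i * τ (b i * x) := by
            refine Finset.sum_congr rfl fun τ _ => ?_
            rw [Finset.sum_mul]
            refine Finset.sum_congr rfl fun i _ => ?_
            rw [map_mul]; ring
        _ = ∑ i, ∑ τ : L ≃ₐ[k] L, b' i * τ (b i * x) := Finset.sum_comm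
        _ = ∑ i, b' i * ∑ τ : L ≃ₐ[k] L, τ (b i * x) := by
            refine Finset.sum_congr rfl fun i _ => (Finset.mul_sum _ _ _).symm
    rw [this]
    have : ∀ i, (∑ τ : L ≃ₐ[k] L, τ (b i * x)) = algebraMap k L (Algebra.trace k L (b i * x)) :=
      fun i => (trace_eq_sum_automorphisms _).symm
    simp_rw [this]
    have hx := Basis.sum_repr b' x
    calc (∑ i, b' i * algebraMap k L (Algebra.trace k L (b i * x)))
        = ∑ i, (b'.repr x i) • b' i := by
          refine Finset.sum_congr rfl fun i _ => ?_
          rw [LinearMap.BilinForm.dualBasis_repr_apply, Algebra.traceForm_apply,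
            Algebra.smul_def, mul_comm (b i) x]
          ring
      _ = x := hx
  -- linear independence of characters
  have hli : LinearIndependent L (fun (σ : L ≃ₐ[k] L) => (σ : L → L)) :=
    LinearIndependent.comp (ι' := L ≃ₐ[k] L)
      (linearIndependent_monoidHom L L) (fun f => f)
      (fun x y h => by ext; exact DFunLike.ext_iff.1 h _)
  rw [linearIndependent_iff'] at hli
  have h0 : (∑ τ : L ≃ₐ[k] L,
      ((∑ i, b' i * τ (b i)) - if τ = 1 then 1 else 0) • (τ : L → L)) = 0 := by
    funext x
    simp only [Finset.sum_apply, Pi.smul_apply, smul_eq_mul, Pi.zero_apply, sub_mul,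
      Finset.sum_sub_distrib]
    rw [key x]
    have : (∑ τ : L ≃ₐ[k] L, (if τ = 1 then (1:L) else 0) * τ x) = x := by
      rw [Finset.sum_eq_single (1 : L ≃ₐ[k] L)]
      · simp
      · intro τ _ hτ; simp [hτ]
      · intro h; exact absurd (Finset.mem_univ _) h
    rw [this, sub_self]
  have := hli Finset.univ _ h0 σ (Finset.mem_univ σ)
  exact sub_eq_zero.mp this

/-- **Semilinear Galois descent for vector spaces.**  Let `L/k` be a finite Galois extension and
`V` an `L`-vector space equipped with a semilinear action of `Gal(L/k)` (a group action by
additive bijections satisfying `σ • (c • v) = σ c • (σ • v)`).  Then the natural map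
`V^{Gal(L/k)} ⊗[k] L → V`, `w ⊗ λ ↦ λ • w`, is an isomorphism of `L`-vector spaces, where `L`
acts on the tensor product through the right-hand factor. -/
theorem semilinear_galois_descent (k L : Type u) [Field k] [Field L] [Algebra k L]
    [FiniteDimensional k L] [IsGalois k L]
    (V : Type v) [AddCommGroup V] [Module k V] [Module L V] [IsScalarTower k L V]
    [DistribMulAction (L ≃ₐ[k] L) V]
    (hsemi : ∀ (σ : L ≃ₐ[k] L) (c : L) (v : V), σ • (c • v) = σ c • (σ • v)) :
    Function.Bijective (galoisDescentMap k L V hsemi) ∧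
      ∀ (c μ : L) (w : galoisFixedPoints k L V hsemi),
        galoisDescentMap k L V hsemi (w ⊗ₜ[k] (c * μ)) =
          c • galoisDescentMap k L V hsemi (w ⊗ₜ[k] μ) := by

  have hf_tmul : ∀ (w : galoisFixedPoints k L V hsemi) (c : L),
      galoisDescentMap k L V hsemi (w ⊗ₜ[k] c) = c • (w : V) := by
    intro w c
    simp [galoisDescentMap]
  refine ⟨⟨?_, ?_⟩, ?_⟩
  · -- injectivity
    rw [injective_iff_map_eq_zero]
    intro x hx
    let bW : Basis _ k (galoisFixedPoints k L V hsemi) :=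
      Basis.ofVectorSpace k (galoisFixedPoints k L V hsemi)
    let bL : Basis _ k L := Basis.ofVectorSpace k L
    set w' : _ → V := fun i => ((bW i : galoisFixedPoints k L V hsemi) : V) with hw'
    have hwk : LinearIndependent k w' :=
      bW.linearIndependent.map' (galoisFixedPoints k L V hsemi).subtype (Submodule.ker_subtype _)
    have hwL : LinearIndependent L w' :=
      galois_li_aux k L V hsemi (fun i σ => (bW i).2 σ) hwk
    have hLI := linearIndependent_smul bL.linearIndependent hwL
    let B := bW.tensorProduct bL
    have hxrepr : Finsupp.linearCombination k
        (⇑(galoisDescentMap k L V hsemi) ∘ ⇑B) (B.repr x) = 0 := by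
      rw [← Finsupp.apply_linearCombination, B.linearCombination_repr, hx]
    have heq : (⇑(galoisDescentMap k L V hsemi) ∘ ⇑B)
        = (fun q : _ × _ => bL q.1 • w' q.2) ∘ Prod.swap := by
      funext p
      simp only [Function.comp_apply, B, Basis.tensorProduct_apply']
      rw [hf_tmul]
      rfl
    have hfB : LinearIndependent k (⇑(galoisDescentMap k L V hsemi) ∘ ⇑B) := by
      rw [heq]
      exact hLI.comp Prod.swap Prod.swap_injective
    have := linearIndependent_iff.mp hfB _ hxrepr
    rw [← B.linearCombination_repr x, this, map_zero]
  · -- surjectivity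
    intro v
    obtain ⟨ι, hι, b, b', he⟩ := galois_dual_basis_aux k L
    set t : L → V := fun c => ∑ σ : L ≃ₐ[k] L, σ c • (σ • v) with ht_def
    have ht : ∀ c : L, t c ∈ galoisFixedPoints k L V hsemi := by
      intro c τ
      calc τ • t c = ∑ σ : L ≃ₐ[k] L, (τ * σ) c • ((τ * σ) • v) := by
            rw [ht_def]
            simp only [Finset.smul_sum]
            refine Finset.sum_congr rfl fun σ _ => ?_
            rw [hsemi, AlgEquiv.mul_apply, mul_smul]
        _ = t c := Fintype.sum_equiv (Equiv.mulLeft τ) _ _ fun σ => rfl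
    have hv : (∑ i, b' i • t (b i)) = v := by
      calc (∑ i, b' i • t (b i))
          = ∑ i, ∑ σ : L ≃ₐ[k] L, (b' i * σ (b i)) • (σ • v) := by
            refine Finset.sum_congr rfl fun i _ => ?_
            rw [ht_def]
            simp only [Finset.smul_sum, smul_smul]
        _ = ∑ σ : L ≃ₐ[k] L, (∑ i, b' i * σ (b i)) • (σ • v) := by
            rw [Finset.sum_comm]
            exact Finset.sum_congr rfl fun σ _ => (Finset.sum_smul).symm
        _ = ∑ σ : L ≃ₐ[k] L, (if σ = 1 then (1:L) else 0) • (σ • v) := by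
            refine Finset.sum_congr rfl fun σ _ => by rw [he σ]
        _ = v := by
            rw [Finset.sum_eq_single (1 : L ≃ₐ[k] L)]
            · simp
            · intro τ _ hτ; simp [hτ]
            · intro h; exact absurd (Finset.mem_univ _) h
    refine ⟨∑ i, (⟨t (b i), ht (b i)⟩ : galoisFixedPoints k L V hsemi) ⊗ₜ[k] (b' i), ?_⟩
    rw [map_sum]
    simp only [hf_tmul]
    exact hv
  · -- semilinearity in the second variable
    intro c μ w
    rw [hf_tmul, hf_tmul, mul_smul]
end

section
/- Let X be a scheme of finite type over a field k that is Cohen–Macaulay of relative dimension one over k, i.e. every local ring O_{X,x} is a Cohen–Macaulay local ring and every irreducible component of X has Krull dimension one. Let Z ⊆ X be a closed subset consisting of finitely many points, each of which is a regular point of X (the local ring O_{X,x} is a regular local ring for every x ∈ Z). Then the map C ↦ C ∖ Z is a bijection from the set of connected components of X to the set of connected components of the open subspace X ∖ Z. -/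
open AlgebraicGeometry TopologicalSpace CategoryTheory Opposite

universe u

/-- `rs` is a regular sequence on `R`: each `rs i` is a nonzerodivisor modulo the ideal generated
by the previous terms. -/
def IsRegularSequenceOn (R : Type*) [CommRing R] (rs : List R) : Prop :=
  ∀ (i : ℕ) (h : i < rs.length) (x : R),
    rs.get ⟨i, h⟩ * x ∈ Ideal.span {r : R | r ∈ rs.take i} →
      x ∈ Ideal.span {r : R | r ∈ rs.take i}

/-- The depth of `R` with respect to an ideal `I`: the supremum of the lengths of regular
sequences contained in `I`. -/
noncomputable def depthWrt (R : Type*) [CommRing R] (I : Ideal R) : ℕ∞ :=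
  sSup {n : ℕ∞ | ∃ rs : List R, (rs.length : ℕ∞) = n ∧ (∀ r ∈ rs, r ∈ I) ∧
    IsRegularSequenceOn R rs}

/-- A Noetherian local ring is Cohen–Macaulay if its depth (w.r.t. its unique maximal ideal)
equals its Krull dimension. -/
def IsCohenMacaulayLocalRing (R : Type*) [CommRing R] : Prop :=
  IsNoetherianRing R ∧ ∃ m : Ideal R, m.IsMaximal ∧ (∀ m' : Ideal R, m'.IsMaximal → m' = m) ∧
    (depthWrt R m : WithBot ℕ∞) = ringKrullDim R

/-- A regular local ring: a Noetherian local ring whose (unique) maximal ideal can be generated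
by dim-many elements. -/
def IsRegularLocalRing' (R : Type*) [CommRing R] : Prop :=
  IsNoetherianRing R ∧ ∃ m : Ideal R, m.IsMaximal ∧ (∀ m' : Ideal R, m'.IsMaximal → m' = m) ∧
    ∃ s : Finset R, Ideal.span (s : Set R) = m ∧ (s.card : WithBot ℕ∞) = ringKrullDim R

theorem isDomain_of_regular_dim_le_one {R : Type*} [CommRing R]
    (hreg : IsRegularLocalRing' R) (hd : ringKrullDim R ≤ 1) : IsDomain R := by
  obtain ⟨hnoeth, m, hm, hmuniq, s, hspan, hcard⟩ := hreg
  have hnontriv : Nontrivial R := by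
    by_contra h
    rw [not_nontrivial_iff_subsingleton] at h
    exact hm.ne_top (Subsingleton.elim _ _)
  have hcard1 : s.card ≤ 1 := by
    have h1 : (s.card : WithBot ℕ∞) ≤ 1 := hcard ▸ hd
    exact_mod_cast h1
  rcases Nat.le_one_iff_eq_zero_or_eq_one.mp hcard1 with h0 | h1
  · -- dim 0 : field
    have hsb : s = ∅ := Finset.card_eq_zero.mp h0
    have hbot : (⊥ : Ideal R).IsMaximal := by
      rw [hsb, Finset.coe_empty, Ideal.span_empty] at hspan
      rwa [← hspan] at hm
    have hfield : IsField R := by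
      refine ⟨exists_pair_ne R, mul_comm, fun {a} ha => ?_⟩
      have hlt : (⊥ : Ideal R) < Ideal.span {a} := by
        rw [bot_lt_iff_ne_bot, Ne, Ideal.span_singleton_eq_bot]
        exact ha
      have htop : Ideal.span {a} = ⊤ := hbot.1.2 _ hlt
      obtain ⟨b, hb⟩ := Ideal.mem_span_singleton'.mp
        (show (1:R) ∈ Ideal.span {a} by rw [htop]; trivial)
      exact ⟨b, by rw [mul_comm]; exact hb⟩
    letI := hfield.toField
    infer_instance
  · -- dim 1
    obtain ⟨t, rfl⟩ := Finset.card_eq_one.mp h1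
    rw [Finset.coe_singleton] at hspan
    haveI : IsLocalRing R := IsLocalRing.of_unique_max_ideal ⟨m, hm, fun I hI => hmuniq I hI⟩
    have hmm : m = IsLocalRing.maximalIdeal R := (hmuniq _ (IsLocalRing.maximalIdeal.isMaximal R)).symm
    have hdim1 : ringKrullDim R = (1 : WithBot ℕ∞) := by
      rw [← hcard]; norm_num
    -- get a strict chain of primes
    have hlt1 : (0 : WithBot ℕ∞) < ⨆ (p : LTSeries (PrimeSpectrum R)), (p.length : WithBot ℕ∞) := by
      rw [← Order.krullDim, ← ringKrullDim, hdim1]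
      norm_num
    obtain ⟨p, hp⟩ := lt_iSup_iff.mp hlt1
    have hpos : 0 < p.length := by exact_mod_cast hp
    set i0 : Fin p.length := ⟨0, hpos⟩
    have hstep := p.step i0
    set q := p i0.castSucc with hq
    set q' := p i0.succ with hq'
    have htq : t ∉ q.asIdeal := by
      intro ht
      have h1 : m ≤ q.asIdeal := by rw [← hspan]; exact (Ideal.span_singleton_le_iff_mem _).mpr ht
      have h2 : q'.asIdeal ≤ m := hmm ▸ IsLocalRing.le_maximalIdeal q'.2.ne_top
      exact absurd (le_trans h2 h1) (not_le_of_gt hstep)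
    have hPle : q.asIdeal ≤ m • q.asIdeal := by
      intro x hx
      have hxm : x ∈ m := hmm ▸ IsLocalRing.le_maximalIdeal q.2.ne_top hx
      rw [← hspan] at hxm
      obtain ⟨y, hy⟩ := Ideal.mem_span_singleton'.mp hxm
      have hyP : y ∈ q.asIdeal := by
        rcases q.2.mem_or_mem (show y * t ∈ q.asIdeal from hy ▸ hx) with h | h
        · exact h
        · exact absurd h htq
      have hxt : x = t • y := by rw [smul_eq_mul, mul_comm]; exact hy.symm
      rw [hxt]
      exact Submodule.smul_mem_smul (hspan ▸ Ideal.subset_span rfl) hyP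
    have hjac : m ≤ Ideal.jacobson ⊥ := by
      apply le_sInf
      rintro J ⟨-, hJmax⟩
      rw [hmuniq J hJmax]
    have hPbot : q.asIdeal = ⊥ :=
      Submodule.eq_bot_of_le_smul_of_le_jacobson_bot m q.asIdeal
        (IsNoetherian.noetherian _) hPle hjac
    have hprime : (⊥ : Ideal R).IsPrime := hPbot ▸ q.2
    haveI : NoZeroDivisors R := by
      constructor
      intro a b hab
      rcases hprime.mem_or_mem (show a * b ∈ (⊥ : Ideal R) by simp [hab]) with h | h
      · exact Or.inl (by simpa using h)
      · exact Or.inr (by simpa using h)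
    exact NoZeroDivisors.to_isDomain R

lemma irreducible_preimage_val {α : Type*} [TopologicalSpace α] {T C : Set α}
    (hC : IsIrreducible C) (hCc : IsClosed C) (hCT : C ⊆ T) :
    IsIrreducible ((Subtype.val : T → α) ⁻¹' C) ∧
      IsClosed ((Subtype.val : T → α) ⁻¹' C) := by
  refine ⟨⟨?_, ?_⟩, hCc.preimage continuous_subtype_val⟩
  · obtain ⟨c, hc⟩ := hC.1
    exact ⟨⟨c, hCT hc⟩, hc⟩
  · rintro u v hu hv ⟨a, ha, hau⟩ ⟨b, hb, hbv⟩
    obtain ⟨u', hu', rfl⟩ := isOpen_induced_iff.mp hu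
    obtain ⟨v', hv', rfl⟩ := isOpen_induced_iff.mp hv
    obtain ⟨x, hxC, hxu, hxv⟩ := hC.2 u' v' hu' hv' ⟨a, ha, hau⟩ ⟨b, hb, hbv⟩
    exact ⟨⟨x, hCT hxC⟩, hxC, hxu, hxv⟩

lemma stalk_dim_le_one (X : Scheme.{u})
    (hdim : ∀ T ∈ irreducibleComponents X, topologicalKrullDim T = (1 : WithBot ℕ∞))
    (z : X) : ringKrullDim (X.presheaf.stalk z) ≤ 1 := by
  rw [ringKrullDim, Order.krullDim]
  refine iSup_le fun p => ?_
  set φ := (X.fromSpecStalk z).base with hφ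
  have hemb : Topology.IsEmbedding φ := (X.fromSpecStalk z).isEmbedding
  set y : Fin (p.length + 1) → X := fun i => φ (p i) with hy
  have hspec : ∀ {i j : Fin (p.length + 1)}, i ≤ j → y i ⤳ y j := fun {i j} hij =>
    ((PrimeSpectrum.le_iff_specializes _ _).mp (p.monotone hij)).map φ.hom.2
  have hinj : ∀ {i j : Fin (p.length + 1)}, y i = y j → i = j := fun {i j} h =>
    p.strictMono.injective (hemb.injective h)
  set T : Set X := irreducibleComponent (y 0) with hT
  have hTmem : T ∈ irreducibleComponents X := irreducibleComponent_mem_irreducibleComponents _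
  have hyT : ∀ i, y i ∈ T := fun i =>
    closure_minimal (Set.singleton_subset_iff.mpr mem_irreducibleComponent)
      isClosed_irreducibleComponent (specializes_iff_mem_closure.mp (hspec (Fin.zero_le i)))
  have hcloT : ∀ i, closure {y i} ⊆ T := fun i =>
    closure_minimal (Set.singleton_subset_iff.mpr (hyT i)) isClosed_irreducibleComponent
  set C : Fin (p.length + 1) → IrreducibleCloseds T := fun i =>
    ⟨(Subtype.val : T → X) ⁻¹' closure {y i},
      (irreducible_preimage_val (isIrreducible_singleton.closure) isClosed_closure (hcloT i)).1,
      (irreducible_preimage_val (isIrreducible_singleton.closure) isClosed_closure (hcloT i)).2⟩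
    with hC
  have key : ∀ {i j : Fin (p.length + 1)}, i < j → C j < C i := by
    intro i j hij
    have hle : C j ≤ C i := fun x hx =>
      closure_minimal
        (Set.singleton_subset_iff.mpr (specializes_iff_mem_closure.mp (hspec hij.le)))
        isClosed_closure hx
    refine lt_of_le_of_ne hle fun heq => ?_
    have h1 : (⟨y j, hyT j⟩ : T) ∈ C j := subset_closure rfl
    have h2 : (⟨y i, hyT i⟩ : T) ∈ C i := subset_closure rfl
    rw [heq] at h1
    rw [← heq] at h2
    have hji : y i ⤳ y j := specializes_iff_mem_closure.mpr h1
    have hij' : y j ⤳ y i := specializes_iff_mem_closure.mpr h2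
    exact hij.ne (hinj (hji.antisymm hij').eq)
  set q : LTSeries (IrreducibleCloseds T) :=
    ⟨p.length, fun i => C i.rev, fun i =>
      key (Fin.rev_lt_rev.mpr (Fin.castSucc_lt_succ (i := i)))⟩ with hq
  have hlen := Order.LTSeries.length_le_krullDim q
  have : Order.krullDim (IrreducibleCloseds T) = 1 := hdim T hTmem
  rw [this] at hlen
  exact_mod_cast hlen

section Setup
variable (k : Type u) [Field k] (X : Scheme.{u}) (f : X ⟶ Spec (CommRingCat.of k))

lemma gamma_jacobson_noeth [LocallyOfFiniteType f] (V : X.affineOpens) :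
    IsJacobsonRing Γ(X, V.1) ∧ IsNoetherianRing Γ(X, V.1) := by
  have e : V.1 ≤ f ⁻¹ᵁ ⊤ := le_top
  have hft : RingHom.FiniteType (f.appLE ⊤ V.1 e).hom :=
    LocallyOfFiniteType.finiteType_of_affine_subset f (isAffineOpen_top _) V.2 e
  have ek : Γ(Spec (CommRingCat.of k), ⊤) ≃+* k :=
    (Scheme.ΓSpecIso (CommRingCat.of k)).commRingCatIsoToRingEquiv
  haveI : IsJacobsonRing Γ(Spec (CommRingCat.of k), ⊤) := (isJacobsonRing_iso ek).mpr inferInstance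
  haveI : IsNoetherianRing Γ(Spec (CommRingCat.of k), ⊤) :=
    isNoetherianRing_of_ringEquiv k ek.symm
  constructor
  · exact hft.isJacobsonRing
  · letI : Algebra Γ(Spec (CommRingCat.of k), ⊤) Γ(X, V.1) := (f.appLE ⊤ V.1 e).hom.toAlgebra
    haveI : Algebra.FiniteType Γ(Spec (CommRingCat.of k), ⊤) Γ(X, V.1) := hft
    exact Algebra.FiniteType.isNoetherianRing Γ(Spec (CommRingCat.of k), ⊤) Γ(X, V.1)

lemma jacobsonSpace_of_finiteType [LocallyOfFiniteType f] : JacobsonSpace X := by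
  refine (TopologicalSpace.IsOpenCover.jacobsonSpace_iff (iSup_affineOpens_eq_top X)).mpr fun V => ?_
  haveI : IsAffine V.1.toScheme := V.2
  haveI hJ : IsJacobsonRing Γ(X, V.1) := (gamma_jacobson_noeth k X f V).1
  haveI : IsJacobsonRing Γ(V.1.toScheme, ⊤) := (isJacobsonRing_iso
    (Scheme.restrictFunctorΓ.app (op V.1)).commRingCatIsoToRingEquiv).mpr hJ
  haveI : JacobsonSpace (Spec Γ(V.1.toScheme, ⊤)) :=
    show JacobsonSpace (PrimeSpectrum Γ(V.1.toScheme, ⊤)) from inferInstance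
  exact JacobsonSpace.of_isClosedEmbedding
    (V.1.toScheme.isoSpec.hom.homeomorph).isClosedEmbedding

lemma noetherianSpace_of_finiteType [LocallyOfFiniteType f] [QuasiCompact f] :
    NoetherianSpace X := by
  haveI : CompactSpace X := QuasiCompact.compactSpace_of_compactSpace f
  have hcov : (Set.univ : Set X) ⊆ ⋃ V : X.affineOpens, (V.1 : Set X) := by
    intro x _
    have := iSup_affineOpens_eq_top X
    rw [Set.mem_iUnion]
    have hx : x ∈ (⊤ : X.Opens) := trivial
    rw [← this] at hx
    simpa using hx
  obtain ⟨t, ht⟩ := isCompact_univ.elim_finite_subcover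
    (fun V : X.affineOpens => (V.1 : Set X)) (fun V => V.1.2) hcov
  have hunion : (⋃ V ∈ t, (V.1 : Set X)) = Set.univ :=
    Set.eq_univ_of_univ_subset ht
  haveI : ∀ V : t, NoetherianSpace ((V.1.1 : Set X) : Type u) := by
    rintro ⟨V, hV⟩
    haveI : IsNoetherianRing Γ(X, V.1) := (gamma_jacobson_noeth k X f V).2
    exact noetherianSpace_of_isAffineOpen V.1 V.2
  have hN := NoetherianSpace.iUnion (fun V : t => (V.1.1 : Set X))
  rw [show (⋃ V : t, (V.1.1 : Set X)) = Set.univ by rw [← hunion]; exact Set.iUnion_subtype _ _ |>.symm ▸ rfl] at hN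
  exact (TopologicalSpace.noetherian_univ_iff (α := X)).mp hN

lemma component_eq_closure_xi (X : Scheme.{u}) {z : X}
    (hdom : IsDomain (X.presheaf.stalk z))
    {T : Set X} (hT : T ∈ irreducibleComponents X) (hzT : z ∈ T) :
    T = closure {(X.fromSpecStalk z).base ⟨⊥, Ideal.bot_prime⟩} := by
  set φ := (X.fromSpecStalk z).base with hφ
  have hTc : IsClosed T := isClosed_of_mem_irreducibleComponents _ hT
  have hirr : IsIrreducible T := hT.1
  have hgen : IsGenericPoint hirr.genericPoint T := hirr.isGenericPoint_genericPoint hTc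
  have hηz : hirr.genericPoint ⤳ z := hgen.specializes hzT
  have hmem : hirr.genericPoint ∈ Set.range φ := by
    rw [hφ, Scheme.range_fromSpecStalk]
    exact hηz
  obtain ⟨pη, hpη⟩ := hmem
  set ξ := φ ⟨⊥, Ideal.bot_prime⟩ with hξ
  have hξη : ξ ⤳ hirr.genericPoint := by
    rw [← hpη]
    exact ((PrimeSpectrum.le_iff_specializes ⟨⊥, Ideal.bot_prime⟩ pη).mp bot_le).map φ.hom.2
  have h1 : T ⊆ closure {ξ} := by
    rw [← hgen.def]
    exact closure_minimal (Set.singleton_subset_iff.mpr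
      (specializes_iff_mem_closure.mp hξη)) isClosed_closure
  have h2 : closure {ξ} ⊆ T := hT.2 (isIrreducible_singleton.closure) h1
  exact le_antisymm h1 h2

lemma not_component_subset (X : Scheme.{u}) [JacobsonSpace X]
    (hdim : ∀ T ∈ irreducibleComponents X, topologicalKrullDim T = (1 : WithBot ℕ∞))
    {T : Set X} (hT : T ∈ irreducibleComponents X) (hTfin : T.Finite) : False := by
  have hTc : IsClosed T := isClosed_of_mem_irreducibleComponents _ hT
  haveI : JacobsonSpace T := JacobsonSpace.of_isClosedEmbedding hTc.isClosedEmbedding_subtypeVal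
  haveI : Finite T := hTfin
  haveI : DiscreteTopology T := JacobsonSpace.discreteTopology (Set.toFinite _)
  haveI hpre := Subtype.preirreducibleSpace hT.1.2
  haveI : Nonempty (↥T) := hT.1.1.to_subtype
  have hsub : ∀ a b : ↥T, a = b := by
    intro a b
    by_contra hab
    obtain ⟨x, -, hxa, hxb⟩ := PreirreducibleSpace.isPreirreducible_univ (X := ↥T)
      {a} {b} (isOpen_discrete _) (isOpen_discrete _) ⟨a, trivial, rfl⟩ ⟨b, trivial, rfl⟩
    exact hab ((Set.mem_singleton_iff.mp hxa).symm.trans (Set.mem_singleton_iff.mp hxb))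
  have huniv : ∀ S : IrreducibleCloseds (↥T), (S : Set ↥T) = Set.univ := by
    intro S
    obtain ⟨a, ha⟩ := S.isIrreducible.1
    exact Set.eq_univ_of_forall fun b => (hsub b a) ▸ ha
  haveI : Unique (IrreducibleCloseds (↥T)) :=
    { default := ⟨Set.univ, ⟨⟨Classical.arbitrary _, trivial⟩,
        PreirreducibleSpace.isPreirreducible_univ⟩, isClosed_univ⟩,
      uniq := fun S => IrreducibleCloseds.ext (by rw [huniv]; rfl) }
  have h0 : topologicalKrullDim (↥T) = 0 := Order.krullDim_eq_zero_of_unique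
  rw [hdim T hT] at h0
  norm_num at h0

lemma preconnected_diff {α : Type u} [TopologicalSpace α]
    (hfin : (irreducibleComponents α).Finite)
    {Z : Set α} (hZc : IsClosed Z)
    (hne : ∀ T ∈ irreducibleComponents α, (T \ Z).Nonempty)
    (huniq : ∀ z ∈ Z, ∀ T1 ∈ irreducibleComponents α, ∀ T2 ∈ irreducibleComponents α,
        z ∈ T1 → z ∈ T2 → T1 = T2)
    (x0 : α) :
    (connectedComponent x0 \ Z).Nonempty ∧ IsPreconnected (connectedComponent x0 \ Z) := by
  set C := connectedComponent x0 with hC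
  have hcomp_sub : ∀ x ∈ C, irreducibleComponent x ⊆ C := by
    intro x hx
    have h1 : IsPreconnected (irreducibleComponent x) :=
      isIrreducible_irreducibleComponent.2.isPreconnected
    have h2 := h1.subset_connectedComponent mem_irreducibleComponent
    rw [hC]
    exact (connectedComponent_eq hx) ▸ h2
  have hnonempty : (C \ Z).Nonempty := by
    obtain ⟨a, haT, haZ⟩ := hne (irreducibleComponent x0)
      (irreducibleComponent_mem_irreducibleComponents x0)
    exact ⟨a, hcomp_sub x0 mem_connectedComponent haT, haZ⟩
  refine ⟨hnonempty, ?_⟩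
  intro u v hu hv hsub hau hbv
  by_contra hcon
  rw [Set.not_nonempty_iff_eq_empty] at hcon
  have hTpre : ∀ T ∈ irreducibleComponents α, IsPreconnected (T \ Z) := by
    intro T hT
    apply IsPreirreducible.isPreconnected
    rintro u' v' hu' hv' ⟨p, ⟨hpT, hpZ⟩, hpu⟩ ⟨q, ⟨hqT, hqZ⟩, hqv⟩
    obtain ⟨w, hwT, ⟨hw1, hw2⟩, hw3, hw4⟩ := hT.1.2 (Zᶜ ∩ u') (Zᶜ ∩ v')
      (hZc.isOpen_compl.inter hu') (hZc.isOpen_compl.inter hv')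
      ⟨p, hpT, hpZ, hpu⟩ ⟨q, hqT, hqZ, hqv⟩
    exact ⟨w, ⟨hwT, hw1⟩, hw2, hw4⟩
  have hside : ∀ T ∈ irreducibleComponents α, T ⊆ C → (T \ Z) ∩ u = ∅ ∨ (T \ Z) ∩ v = ∅ := by
    intro T hT hTC
    by_contra h
    push_neg at h
    obtain ⟨h1, h2⟩ := h
    have h3 := hTpre T hT u v hu hv (fun w hw => hsub ⟨hTC hw.1, hw.2⟩) h1 h2
    obtain ⟨w, hw1, hw2⟩ := h3
    have hww : w ∈ (C \ Z) ∩ (u ∩ v) := ⟨⟨hTC hw1.1, hw1.2⟩, hw2⟩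
    rw [hcon] at hww
    exact hww
  set FA := {T | T ∈ irreducibleComponents α ∧ T ⊆ C ∧ (T \ Z) ∩ v = ∅} with hFA
  set FB := {T | T ∈ irreducibleComponents α ∧ T ⊆ C ∧ (T \ Z) ∩ u = ∅} with hFB
  set SA := ⋃₀ FA with hSA
  set SB := ⋃₀ FB with hSB
  have hSAc : IsClosed SA := by
    rw [hSA, Set.sUnion_eq_biUnion]
    exact Set.Finite.isClosed_biUnion (hfin.subset fun T hT => hT.1)
      (fun T hT => isClosed_of_mem_irreducibleComponents T hT.1)
  have hSBc : IsClosed SB := by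
    rw [hSB, Set.sUnion_eq_biUnion]
    exact Set.Finite.isClosed_biUnion (hfin.subset fun T hT => hT.1)
      (fun T hT => isClosed_of_mem_irreducibleComponents T hT.1)
  have hcover : C ⊆ SA ∪ SB := by
    intro x hx
    have hTmem := irreducibleComponent_mem_irreducibleComponents x
    have hTC := hcomp_sub x hx
    rcases hside _ hTmem hTC with h | h
    · exact Or.inr ⟨_, ⟨hTmem, hTC, h⟩, mem_irreducibleComponent⟩
    · exact Or.inl ⟨_, ⟨hTmem, hTC, h⟩, mem_irreducibleComponent⟩
  have hdisj : SA ∩ SB = ∅ := by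
    rw [Set.eq_empty_iff_forall_notMem]
    rintro p ⟨hpA, hpB⟩
    obtain ⟨T1, hT1, hpT1⟩ := hpA
    obtain ⟨T2, hT2, hpT2⟩ := hpB
    by_cases heq : T1 = T2
    · subst heq
      obtain ⟨w, hwT, hwZ⟩ := hne T1 hT1.1
      rcases hsub ⟨hT1.2.1 hwT, hwZ⟩ with hw | hw
      · have : w ∈ (T1 \ Z) ∩ u := ⟨⟨hwT, hwZ⟩, hw⟩
        rw [hT2.2.2] at this
        exact this
      · have : w ∈ (T1 \ Z) ∩ v := ⟨⟨hwT, hwZ⟩, hw⟩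
        rw [hT1.2.2] at this
        exact this
    · have hpZ : p ∉ Z := fun hpZ => heq (huniq p hpZ T1 hT1.1 T2 hT2.1 hpT1 hpT2)
      rcases hsub ⟨hT1.2.1 hpT1, hpZ⟩ with hw | hw
      · have : p ∈ (T2 \ Z) ∩ u := ⟨⟨hpT2, hpZ⟩, hw⟩
        rw [hT2.2.2] at this
        exact this
      · have : p ∈ (T1 \ Z) ∩ v := ⟨⟨hpT1, hpZ⟩, hw⟩
        rw [hT1.2.2] at this
        exact this
  have hCdisj : C ∩ (SA ∩ SB) = ∅ := by rw [hdisj, Set.inter_empty]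
  have hor := (isPreconnected_iff_subset_of_disjoint_closed.mp isPreconnected_connectedComponent)
    SA SB hSAc hSBc hcover hCdisj
  obtain ⟨a, ⟨haC, haZ⟩, hau'⟩ := hau
  obtain ⟨b, ⟨hbC, hbZ⟩, hbv'⟩ := hbv
  have haSA : a ∈ SA := by
    have hTmem := irreducibleComponent_mem_irreducibleComponents a
    have hTC := hcomp_sub a haC
    rcases hside _ hTmem hTC with h | h
    · exfalso
      have : a ∈ (irreducibleComponent a \ Z) ∩ u := ⟨⟨mem_irreducibleComponent, haZ⟩, hau'⟩
      rw [h] at this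
      exact this
    · exact ⟨_, ⟨hTmem, hTC, h⟩, mem_irreducibleComponent⟩
  have hbSB : b ∈ SB := by
    have hTmem := irreducibleComponent_mem_irreducibleComponents b
    have hTC := hcomp_sub b hbC
    rcases hside _ hTmem hTC with h | h
    · exact ⟨_, ⟨hTmem, hTC, h⟩, mem_irreducibleComponent⟩
    · exfalso
      have : b ∈ (irreducibleComponent b \ Z) ∩ v := ⟨⟨mem_irreducibleComponent, hbZ⟩, hbv'⟩
      rw [h] at this
      exact this
  rcases hor with h | h
  · have : b ∈ SA ∩ SB := ⟨h hbC, hbSB⟩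
    rw [hdisj] at this
    exact this
  · have : a ∈ SA ∩ SB := ⟨haSA, h haC⟩
    rw [hdisj] at this
    exact this

/-- Let `X` be a scheme of finite type over a field `k`, Cohen–Macaulay of relative dimension
one (all stalks are Cohen–Macaulay local rings and all irreducible components of `X` have Krull
dimension one).  Let `Z ⊆ X` be a closed subset consisting of finitely many regular points of
`X`.  Then `C ↦ C \ Z` is a bijection from the set of connected components of `X` to the set of
connected components of `X \ Z`. -/
theorem connectedComponents_of_remove_finite_regular_points
    (k : Type u) [Field k] (X : Scheme.{u})
    (f : X ⟶ Spec (CommRingCat.of k)) [LocallyOfFiniteType f] [QuasiCompact f]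
    (hCM : ∀ x : X, IsCohenMacaulayLocalRing (X.presheaf.stalk x))
    (hdim : ∀ T ∈ irreducibleComponents X, topologicalKrullDim T = (1 : WithBot ℕ∞))
    (Z : Set X) (hZc : IsClosed Z) (hZf : Z.Finite)
    (hreg : ∀ x ∈ Z, IsRegularLocalRing' (X.presheaf.stalk x)) :
    Set.BijOn (fun C : Set X => C \ Z) (Set.range fun x : X => connectedComponent x)
      {D : Set X | ∃ x : X, x ∉ Z ∧ D = connectedComponentIn Zᶜ x} := by
  classical
  haveI : JacobsonSpace X := jacobsonSpace_of_finiteType k X f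
  haveI : TopologicalSpace.NoetherianSpace X := noetherianSpace_of_finiteType k X f
  have hfin := TopologicalSpace.NoetherianSpace.finite_irreducibleComponents (α := X)
  have hdom : ∀ z ∈ Z, IsDomain (X.presheaf.stalk z) := fun z hz =>
    isDomain_of_regular_dim_le_one (hreg z hz) (stalk_dim_le_one X hdim z)
  have hne : ∀ T ∈ irreducibleComponents X, (T \ Z).Nonempty := by
    intro T hT
    rw [Set.diff_nonempty]
    intro hsub
    exact not_component_subset X hdim hT (hZf.subset hsub)
  have huniq : ∀ z ∈ Z, ∀ T1 ∈ irreducibleComponents X, ∀ T2 ∈ irreducibleComponents X,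
      z ∈ T1 → z ∈ T2 → T1 = T2 := by
    intro z hz T1 h1 T2 h2 hz1 hz2
    rw [component_eq_closure_xi X (hdom z hz) h1 hz1,
      component_eq_closure_xi X (hdom z hz) h2 hz2]
  have key := fun x0 : X => preconnected_diff hfin hZc hne huniq x0
  have hCC : ∀ y : X, y ∉ Z → connectedComponent y \ Z = connectedComponentIn Zᶜ y := by
    intro y hy
    apply subset_antisymm
    · exact (key y).2.subset_connectedComponentIn ⟨mem_connectedComponent, hy⟩
        (fun w hw => hw.2)
    · intro w hw
      refine ⟨isPreconnected_connectedComponentIn.subset_connectedComponent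
        (mem_connectedComponentIn (show y ∈ Zᶜ from hy)) hw, ?_⟩
      exact connectedComponentIn_subset _ _ hw
  refine ⟨?_, ?_, ?_⟩
  · rintro Cset ⟨x, rfl⟩
    obtain ⟨⟨y, hyC, hyZ⟩, -⟩ := key x
    refine ⟨y, hyZ, ?_⟩
    show connectedComponent x \ Z = connectedComponentIn Zᶜ y
    rw [connectedComponent_eq hyC]
    exact hCC y hyZ
  · rintro C1 ⟨x1, rfl⟩ C2 ⟨x2, rfl⟩ heq
    obtain ⟨⟨y, hyC, hyZ⟩, -⟩ := key x1
    have hy2 : y ∈ connectedComponent x2 \ Z := by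
      have : y ∈ connectedComponent x1 \ Z := ⟨hyC, hyZ⟩
      rwa [show connectedComponent x1 \ Z = connectedComponent x2 \ Z from heq] at this
    exact (connectedComponent_eq hyC).trans (connectedComponent_eq hy2.1).symm
  · rintro D ⟨x, hxZ, rfl⟩
    exact ⟨connectedComponent x, ⟨x, rfl⟩, hCC x hxZ⟩
end Setup
end

section
/- Let A be a commutative ring and let B, C be commutative A-algebras that are finite free as A-modules. Then the functor from commutative A-algebras to sets sending an A-algebra D to the set of D-algebra homomorphisms C ⊗_A D → B ⊗_A D is corepresentable by a finitely presented commutative A-algebra: there exist a finitely presented commutative A-algebra R and bijections Hom_{A-alg}(R, D) ≃ Hom_{D-alg}(C ⊗_A D, B ⊗_A D) natural in D. Moreover, the subfunctor sending D to the set of D-algebra isomorphisms C ⊗_A D → B ⊗_A D is likewise corepresentable by a finitely presented commutative A-algebra. -/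
open TensorProduct

attribute [local instance] Algebra.TensorProduct.rightAlgebra

universe u

set_option linter.unusedSectionVars false
set_option maxHeartbeats 1000000

namespace CorepAux

variable {A : Type u} [CommRing A]

section coords

variable {B : Type u} [CommRing B] [Algebra A B] {ι : Type} [Fintype ι] [DecidableEq ι]
variable {D : Type u} [CommRing D] [Algebra A D]

/-- Coordinate functions on `B ⊗[A] D` w.r.t. a basis of `B`. -/
noncomputable def co (b : Module.Basis ι A B) (i : ι) : B ⊗[A] D →ₗ[A] D :=
  (TensorProduct.lid A D).toLinearMap ∘ₗ LinearMap.rTensor D (b.coord i)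

lemma co_tmul (b : Module.Basis ι A B) (i : ι) (x : B) (d : D) :
    co b i (x ⊗ₜ[A] d) = b.repr x i • d := by
  simp [co]

lemma sum_co (b : Module.Basis ι A B) (x : B ⊗[A] D) :
    ∑ i, b i ⊗ₜ[A] co b i x = x := by
  induction x with
  | zero => simp
  | tmul y d =>
      simp only [co_tmul]
      calc ∑ i, b i ⊗ₜ[A] (b.repr y i • d) = ∑ i, (b.repr y i • b i) ⊗ₜ[A] d := by
            refine Finset.sum_congr rfl fun i _ => ?_
            rw [tmul_smul, smul_tmul']
      _ = y ⊗ₜ[A] d := by rw [← TensorProduct.sum_tmul, Module.Basis.sum_repr]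
  | add x y hx hy =>
      simp only [map_add, tmul_add]
      rw [Finset.sum_add_distrib, hx, hy]
      


lemma co_sum (b : Module.Basis ι A B) (d : ι → D) (i : ι) :
    co b i (∑ k, b k ⊗ₜ[A] d k) = d i := by
  rw [map_sum]
  simp only [co_tmul, Module.Basis.repr_self_apply]
  simp [ite_smul]

lemma eq_zero_of_co (b : Module.Basis ι A B) (x : B ⊗[A] D) (h : ∀ i, co b i x = 0) : x = 0 := by
  rw [← sum_co b x]
  simp [h]

variable {D' : Type u} [CommRing D'] [Algebra A D']

lemma co_map (b : Module.Basis ι A B) (g : D →ₐ[A] D') (x : B ⊗[A] D) (i : ι) :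
    co b i (Algebra.TensorProduct.map (AlgHom.id A B) g x) = g (co b i x) := by
  induction x with
  | zero => simp
  | tmul y d => simp [co_tmul, Algebra.TensorProduct.map_tmul,
      map_smul g.toLinearMap (b.repr y i) d]
  | add x y hx hy => simp [map_add, hx, hy]

end coords

end CorepAux




namespace CorepAux2

variable {A : Type u} [CommRing A]
variable {B : Type u} [CommRing B] [Algebra A B]
variable {C : Type u} [CommRing C] [Algebra A C]
variable {D : Type u} [CommRing D] [Algebra A D]

lemma algebraMap_right (d : D) :
    algebraMap D (C ⊗[A] D) d = 1 ⊗ₜ[A] d := rfl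

lemma smul_right (d : D) (x : C) (d' : D) :
    d • (x ⊗ₜ[A] d') = x ⊗ₜ[A] (d * d') := by
  rw [Algebra.smul_def, algebraMap_right, Algebra.TensorProduct.tmul_mul_tmul, one_mul]

lemma tower_right : IsScalarTower A D (C ⊗[A] D) := by
  refine IsScalarTower.of_algebraMap_eq fun a => ?_
  rw [algebraMap_right, Algebra.TensorProduct.algebraMap_apply,
    Algebra.algebraMap_eq_smul_one, Algebra.algebraMap_eq_smul_one, smul_tmul]

/-- `algebraMap D (B ⊗[A] D)` as an `A`-algebra hom. -/
noncomputable def incRight : D →ₐ[A] B ⊗[A] D where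
  toRingHom := algebraMap D (B ⊗[A] D)
  commutes' := fun a => by
    haveI := tower_right (A := A) (C := B) (D := D)
    exact (IsScalarTower.algebraMap_apply A D (B ⊗[A] D) a).symm

lemma incRight_apply (d : D) : (incRight (A := A) (B := B) (D := D)) d = 1 ⊗ₜ[A] d := rfl

/-- Lift an `A`-algebra hom `C → B ⊗[A] D` to a `D`-algebra hom `C ⊗[A] D → B ⊗[A] D`. -/
noncomputable def liftRight (f : C →ₐ[A] B ⊗[A] D) : C ⊗[A] D →ₐ[D] B ⊗[A] D where
  toRingHom := (Algebra.TensorProduct.productMap f incRight).toRingHom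
  commutes' := fun d => by
    show Algebra.TensorProduct.productMap f incRight (algebraMap D (C ⊗[A] D) d) = _
    rw [algebraMap_right]
    rw [Algebra.TensorProduct.productMap_apply_tmul, map_one, one_mul, incRight_apply,
      algebraMap_right]

lemma liftRight_tmul (f : C →ₐ[A] B ⊗[A] D) (x : C) (d : D) :
    liftRight f (x ⊗ₜ[A] d) = f x * (1 ⊗ₜ[A] d) := by
  show Algebra.TensorProduct.productMap f incRight (x ⊗ₜ[A] d) = _
  simp [Algebra.TensorProduct.productMap_apply_tmul, incRight_apply]

lemma liftRight_tmul_one (f : C →ₐ[A] B ⊗[A] D) (x : C) :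
    liftRight f (x ⊗ₜ[A] 1) = f x := by
  rw [liftRight_tmul]
  have : (1 : B ⊗[A] D) = 1 ⊗ₜ[A] 1 := rfl
  rw [← this, mul_one]

/-- `D`-algebra homs out of `C ⊗[A] D` are determined by values on `c ⊗ 1`. -/
lemma algHom_right_ext {E : Type u} [CommRing E] [Algebra D E]
    {F G : C ⊗[A] D →ₐ[D] E} (h : ∀ x : C, F (x ⊗ₜ[A] 1) = G (x ⊗ₜ[A] 1)) : F = G := by
  apply AlgHom.ext
  intro z
  induction z with
  | zero => simp
  | tmul x d =>
      have hx : x ⊗ₜ[A] d = d • (x ⊗ₜ[A] (1 : D)) := by rw [smul_right, mul_one]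
      rw [hx, map_smul, map_smul, h]
  | add x y hx hy => rw [map_add, map_add, hx, hy]

/-- The `A`-algebra hom underlying a `D`-algebra hom out of `C ⊗[A] D`, restricted to `C`. -/
noncomputable def resLeft {E : Type u} [CommRing E] [Algebra A E] [Algebra D E]
    [IsScalarTower A D E] (F : C ⊗[A] D →ₐ[D] E) : C →ₐ[A] E where
  toRingHom := F.toRingHom.comp (Algebra.TensorProduct.includeLeftRingHom)
  commutes' := fun a => by
    haveI := tower_right (A := A) (C := C) (D := D)
    show F (algebraMap A C a ⊗ₜ[A] 1) = _
    have : (algebraMap A C a ⊗ₜ[A] (1 : D)) = algebraMap A (C ⊗[A] D) a :=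
      (Algebra.TensorProduct.algebraMap_apply a).symm
    rw [this, IsScalarTower.algebraMap_apply A D (C ⊗[A] D), F.commutes,
      ← IsScalarTower.algebraMap_apply]

lemma resLeft_apply {E : Type u} [CommRing E] [Algebra A E] [Algebra D E]
    [IsScalarTower A D E] (F : C ⊗[A] D →ₐ[D] E) (x : C) :
    resLeft F x = F (x ⊗ₜ[A] 1) := rfl

end CorepAux2

namespace CorepAux3

open MvPolynomial CorepAux CorepAux2

variable {A : Type u} [CommRing A]
variable {C : Type u} [CommRing C] [Algebra A C]
variable {κ : Type} [Fintype κ] [DecidableEq κ]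

/-- evaluation of variables at basis elements -/
noncomputable def pres (c : Module.Basis κ A C) : MvPolynomial κ A →ₐ[A] C := aeval fun j => c j

/-- linear section of `pres` -/
noncomputable def lsec (c : Module.Basis κ A C) : C →ₗ[A] MvPolynomial κ A :=
  c.constr A fun j => X j

lemma lsec_apply (c : Module.Basis κ A C) (x : C) :
    lsec c x = ∑ j, c.repr x j • X j := by
  rw [lsec, Module.Basis.constr_apply_fintype]
  simp [Module.Basis.equivFun_apply]

lemma pres_lsec (c : Module.Basis κ A C) (x : C) : pres c (lsec c x) = x := by
  rw [lsec_apply, map_sum]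
  simp only [map_smul, pres, aeval_X]
  exact c.sum_repr x

lemma pres_surjective (c : Module.Basis κ A C) : Function.Surjective (pres c) :=
  fun x => ⟨lsec c x, pres_lsec c x⟩

/-- index type for the relations -/
abbrev relIdx (κ : Type) := (κ × κ) ⊕ Unit

/-- the standard relations of a finite free algebra -/
noncomputable def rel (c : Module.Basis κ A C) : relIdx κ → MvPolynomial κ A :=
  Sum.elim (fun jk => X jk.1 * X jk.2 - lsec c (c jk.1 * c jk.2)) (fun _ => 1 - lsec c 1)

lemma pres_X (c : Module.Basis κ A C) (j : κ) : pres c (X j) = c j := by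
  simp [pres]

lemma asmul_mem {K : Ideal (MvPolynomial κ A)} {p : MvPolynomial κ A} (a : A)
    (h : p ∈ K) : a • p ∈ K := by
  rw [MvPolynomial.smul_eq_C_mul]
  exact K.mul_mem_left _ h

lemma pres_rel (c : Module.Basis κ A C) (s : relIdx κ) : pres c (rel c s) = 0 := by
  cases s with
  | inl jk =>
      simp only [rel, Sum.elim_inl, map_sub, map_mul, pres_lsec, pres_X, sub_self]
  | inr u =>
      simp only [rel, Sum.elim_inr, map_sub, pres_lsec, map_one, sub_self]

lemma sub_lsec_mem (c : Module.Basis κ A C) (p : MvPolynomial κ A) :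
    p - lsec c (pres c p) ∈ Ideal.span (Set.range (rel c)) := by
  set K := Ideal.span (Set.range (rel c)) with hK
  induction p using MvPolynomial.induction_on with
  | C a =>
      have h1 : (MvPolynomial.C a : MvPolynomial κ A) = a • (1 : MvPolynomial κ A) := by
        rw [← Algebra.algebraMap_eq_smul_one]; rfl
      have h2 : pres c (MvPolynomial.C a : MvPolynomial κ A) = a • (1 : C) := by
        rw [h1, map_smul, map_one]
      rw [h2, map_smul, h1, ← smul_sub]
      exact asmul_mem a (Ideal.subset_span ⟨Sum.inr (), rfl⟩)
  | add p q hp hq =>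
      have : p + q - lsec c (pres c (p + q)) =
          (p - lsec c (pres c p)) + (q - lsec c (pres c q)) := by
        rw [map_add, map_add]; ring
      rw [this]
      exact Ideal.add_mem _ hp hq
  | mul_X p j hp =>
      have hA : lsec c (pres c p) * X j = ∑ k, c.repr (pres c p) k • (X k * X j) := by
        rw [lsec_apply, Finset.sum_mul]
        exact Finset.sum_congr rfl fun k _ => smul_mul_assoc _ _ _
      have hx : pres c p = ∑ k, c.repr (pres c p) k • c k := (c.sum_repr _).symm
      have hB : lsec c (pres c p * c j) = ∑ k, c.repr (pres c p) k • lsec c (c k * c j) := by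
        conv_lhs => rw [hx, Finset.sum_mul]
        rw [map_sum]
        refine Finset.sum_congr rfl fun k _ => ?_
        rw [smul_mul_assoc, map_smul]
      have hgen : ∑ k, c.repr (pres c p) k • (X k * X j - lsec c (c k * c j)) ∈ K :=
        Ideal.sum_mem _ fun k _ =>
          asmul_mem _ (Ideal.subset_span ⟨Sum.inl (k, j), rfl⟩)
      have hmul : (p - lsec c (pres c p)) * X j ∈ K := Ideal.mul_mem_right _ _ hp
      have hpres : pres c (p * X j) = pres c p * c j := by
        rw [map_mul, pres_X]
      have key : p * X j - lsec c (pres c (p * X j)) =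
          (p - lsec c (pres c p)) * X j +
            ∑ k, c.repr (pres c p) k • (X k * X j - lsec c (c k * c j)) := by
        rw [hpres, hB]
        simp only [smul_sub, Finset.sum_sub_distrib, ← hA]
        ring
      rw [key]
      exact Ideal.add_mem _ hmul hgen

lemma ker_le_span (c : Module.Basis κ A C) {p : MvPolynomial κ A} (hp : pres c p = 0) :
    p ∈ Ideal.span (Set.range (rel c)) := by
  have := sub_lsec_mem c p
  rwa [hp, map_zero, sub_zero] at this

end CorepAux3

namespace CorepAux4

open MvPolynomial CorepAux CorepAux2 CorepAux3

variable {A : Type u} [CommRing A]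
variable {B : Type u} [CommRing B] [Algebra A B]
variable {C : Type u} [CommRing C] [Algebra A C]
variable {ι κ : Type} [Fintype ι] [DecidableEq ι] [Fintype κ] [DecidableEq κ]

/-- the universal point -/
noncomputable def vU (b : Module.Basis ι A B) : κ → B ⊗[A] MvPolynomial (κ × ι) A :=
  fun j => ∑ i, b i ⊗ₜ[A] X (j, i)

/-- the defining polynomials of the hom functor -/
noncomputable def homPoly (b : Module.Basis ι A B) (c : Module.Basis κ A C) :
    (relIdx κ × ι) → MvPolynomial (κ × ι) A :=
  fun si => co b si.2 (aeval (vU b) (rel c si.1))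

variable {D : Type u} [CommRing D] [Algebra A D]

/-- the point of `B ⊗ D` attached to coordinates `t` -/
noncomputable def vt (b : Module.Basis ι A B) (t : κ × ι → D) : κ → B ⊗[A] D :=
  fun j => ∑ i, b i ⊗ₜ[A] t (j, i)

lemma vt_eq_map (b : Module.Basis ι A B) (t : κ × ι → D) (j : κ) :
    Algebra.TensorProduct.map (AlgHom.id A B) (aeval t) (vU b j) = vt b t j := by
  rw [vU, vt, map_sum]
  refine Finset.sum_congr rfl fun i _ => ?_
  rw [Algebra.TensorProduct.map_tmul, AlgHom.coe_id, id_eq, aeval_X]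

lemma aeval_vt (b : Module.Basis ι A B) (t : κ × ι → D) (p : MvPolynomial κ A) :
    aeval (vt b t) p =
      Algebra.TensorProduct.map (AlgHom.id A B) (aeval t) (aeval (vU b) p) := by
  have h : (Algebra.TensorProduct.map (AlgHom.id A B) (aeval t)).comp (aeval (vU b)) =
      aeval (vt b t) := by
    apply MvPolynomial.algHom_ext
    intro j
    rw [AlgHom.comp_apply, aeval_X, aeval_X, vt_eq_map]
  rw [← h, AlgHom.comp_apply]

/-- solution predicate -/
def Sol (b : Module.Basis ι A B) (c : Module.Basis κ A C) (t : κ × ι → D) : Prop :=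
  ∀ l, aeval t (homPoly b c l) = 0

lemma sol_iff (b : Module.Basis ι A B) (c : Module.Basis κ A C) (t : κ × ι → D) :
    Sol b c t ↔ ∀ s, aeval (vt b t) (rel c s) = 0 := by
  have key : ∀ s i, aeval t (homPoly b c (s, i)) = co b i (aeval (vt b t) (rel c s)) := by
    intro s i
    rw [homPoly, aeval_vt, co_map]
  constructor
  · intro h s
    refine eq_zero_of_co b _ fun i => ?_
    rw [← key]
    exact h (s, i)
  · intro h ⟨s, i⟩
    rw [key, h, map_zero]

lemma sol_map (b : Module.Basis ι A B) (c : Module.Basis κ A C) {t : κ × ι → D} (ht : Sol b c t)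
    {D' : Type u} [CommRing D'] [Algebra A D'] (φ : D →ₐ[A] D') : Sol b c (φ ∘ t) := by
  intro l
  have h : (aeval (φ ∘ t) : MvPolynomial (κ × ι) A →ₐ[A] D') = φ.comp (aeval t) := by
    apply MvPolynomial.algHom_ext
    intro v
    simp
  rw [h, AlgHom.comp_apply, ht l, map_zero]

lemma span_rel_le_ker (b : Module.Basis ι A B) (c : Module.Basis κ A C) {t : κ × ι → D}
    (ht : Sol b c t) :
    Ideal.span (Set.range (rel c)) ≤ RingHom.ker (aeval (vt b t)) := by
  rw [Ideal.span_le]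
  rintro z ⟨s, rfl⟩
  exact (sol_iff b c t).1 ht s

lemma aeval_lsec_pres (b : Module.Basis ι A B) (c : Module.Basis κ A C) {t : κ × ι → D}
    (ht : Sol b c t) (r : MvPolynomial κ A) :
    aeval (vt b t) (lsec c (pres c r)) = aeval (vt b t) r := by
  have h0 : aeval (vt b t) (r - lsec c (pres c r)) = 0 :=
    span_rel_le_ker b c ht (sub_lsec_mem c r)
  rw [map_sub, sub_eq_zero] at h0
  exact h0.symm

/-- the `A`-algebra hom `C → B ⊗ D` attached to a solution -/
noncomputable def fSol (b : Module.Basis ι A B) (c : Module.Basis κ A C) {t : κ × ι → D}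
    (ht : Sol b c t) : C →ₐ[A] B ⊗[A] D where
  toFun := fun x => aeval (vt b t) (lsec c x)
  map_one' := by
    show aeval (vt b t) (lsec c (1 : C)) = 1
    rw [show (1 : C) = pres c 1 from (map_one _).symm, aeval_lsec_pres b c ht, map_one]
  map_mul' := by
    intro x y
    obtain ⟨p, rfl⟩ := pres_surjective c x
    obtain ⟨q, rfl⟩ := pres_surjective c y
    show aeval (vt b t) (lsec c (pres c p * pres c q)) = _ * _
    rw [← map_mul (pres c) p q, aeval_lsec_pres b c ht, map_mul]
    show _ = aeval (vt b t) (lsec c (pres c p)) * aeval (vt b t) (lsec c (pres c q))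
    rw [aeval_lsec_pres b c ht, aeval_lsec_pres b c ht]
  map_zero' := by
    show aeval (vt b t) (lsec c (0 : C)) = 0
    rw [map_zero, map_zero]
  map_add' := by
    intro x y
    show aeval (vt b t) (lsec c (x + y)) = _
    rw [map_add, map_add]
  commutes' := by
    intro a
    show aeval (vt b t) (lsec c (algebraMap A C a)) = algebraMap A (B ⊗[A] D) a
    rw [show algebraMap A C a = pres c (MvPolynomial.C a) by
      rw [pres]; exact (aeval_C _ a).symm]
    rw [aeval_lsec_pres b c ht, aeval_C]

lemma fSol_apply (b : Module.Basis ι A B) (c : Module.Basis κ A C) {t : κ × ι → D}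
    (ht : Sol b c t) (x : C) : fSol b c ht x = aeval (vt b t) (lsec c x) := rfl

lemma fSol_pres (b : Module.Basis ι A B) (c : Module.Basis κ A C) {t : κ × ι → D}
    (ht : Sol b c t) (r : MvPolynomial κ A) :
    fSol b c ht (pres c r) = aeval (vt b t) r := aeval_lsec_pres b c ht r

lemma fSol_basis (b : Module.Basis ι A B) (c : Module.Basis κ A C) {t : κ × ι → D}
    (ht : Sol b c t) (j : κ) : fSol b c ht (c j) = ∑ i, b i ⊗ₜ[A] t (j, i) := by
  rw [show c j = pres c (X j) from (pres_X c j).symm, fSol_pres, aeval_X, vt]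


lemma aeval_comp_eq {σ : Type} {D' : Type u} [CommRing D'] [Algebra A D']
    (φ : D →ₐ[A] D') (t : σ → D) :
    (aeval (φ ∘ t) : MvPolynomial σ A →ₐ[A] D') = φ.comp (aeval t) := by
  apply MvPolynomial.algHom_ext
  intro v
  simp

lemma fSol_map (b : Module.Basis ι A B) (c : Module.Basis κ A C) {t : κ × ι → D} (ht : Sol b c t)
    {D' : Type u} [CommRing D'] [Algebra A D'] (φ : D →ₐ[A] D') (x : C) :
    fSol b c (sol_map b c ht φ) x =
      Algebra.TensorProduct.map (AlgHom.id A B) φ (fSol b c ht x) := by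
  obtain ⟨p, rfl⟩ := pres_surjective c x
  rw [fSol_pres, fSol_pres, aeval_vt, aeval_vt, aeval_comp_eq,
    ← AlgHom.comp_id (AlgHom.id A B), Algebra.TensorProduct.map_comp, AlgHom.comp_apply]
  rw [AlgHom.comp_id]

/-- coordinates attached to a `D`-algebra hom -/
noncomputable def tOf (b : Module.Basis ι A B) (c : Module.Basis κ A C)
    (F : C ⊗[A] D →ₐ[D] B ⊗[A] D) : κ × ι → D :=
  fun ji => co b ji.2 (F (c ji.1 ⊗ₜ[A] 1))

lemma vt_tOf (b : Module.Basis ι A B) (c : Module.Basis κ A C) (F : C ⊗[A] D →ₐ[D] B ⊗[A] D) (j : κ) :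
    vt b (tOf b c F) j = F (c j ⊗ₜ[A] 1) := by
  show (∑ i, b i ⊗ₜ[A] co b i (F (c j ⊗ₜ[A] 1))) = F (c j ⊗ₜ[A] 1)
  exact sum_co b _

lemma aeval_vt_tOf (b : Module.Basis ι A B) (c : Module.Basis κ A C) (F : C ⊗[A] D →ₐ[D] B ⊗[A] D) :
    haveI := tower_right (A := A) (C := B) (D := D)
    (aeval (vt b (tOf b c F)) : MvPolynomial κ A →ₐ[A] B ⊗[A] D) =
      (resLeft F).comp (pres c) := by
  haveI := tower_right (A := A) (C := B) (D := D)
  apply MvPolynomial.algHom_ext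
  intro j
  rw [aeval_X, vt_tOf, AlgHom.comp_apply, pres_X, resLeft_apply]

lemma sol_tOf (b : Module.Basis ι A B) (c : Module.Basis κ A C) (F : C ⊗[A] D →ₐ[D] B ⊗[A] D) :
    Sol b c (tOf b c F) := by
  haveI := tower_right (A := A) (C := B) (D := D)
  rw [sol_iff]
  intro s
  rw [show (aeval (vt b (tOf b c F)) : MvPolynomial κ A →ₐ[A] B ⊗[A] D) =
    (resLeft F).comp (pres c) from aeval_vt_tOf b c F, AlgHom.comp_apply, pres_rel, map_zero]

/-- the equivalence between solutions and `D`-algebra homs -/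
noncomputable def solEquivHom (b : Module.Basis ι A B) (c : Module.Basis κ A C) :
    {t : κ × ι → D // Sol b c t} ≃ ((C ⊗[A] D) →ₐ[D] (B ⊗[A] D)) where
  toFun th := liftRight (fSol b c th.2)
  invFun F := ⟨tOf b c F, sol_tOf b c F⟩
  left_inv := by
    rintro ⟨t, ht⟩
    apply Subtype.ext
    funext ji
    obtain ⟨j, i⟩ := ji
    show co b i (liftRight (fSol b c ht) (c j ⊗ₜ[A] 1)) = t (j, i)
    rw [liftRight_tmul_one, fSol_basis, co_sum]
  right_inv := by
    intro F
    haveI := tower_right (A := A) (C := B) (D := D)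
    have hf : fSol b c (sol_tOf b c F) = resLeft F := by
      apply AlgHom.ext
      intro x
      obtain ⟨p, rfl⟩ := pres_surjective c x
      rw [fSol_pres]
      rw [show (aeval (vt b (tOf b c F)) : MvPolynomial κ A →ₐ[A] B ⊗[A] D) =
        (resLeft F).comp (pres c) from aeval_vt_tOf b c F]
      rfl
    apply algHom_right_ext
    intro x
    rw [liftRight_tmul_one, hf, resLeft_apply]

lemma solEquivHom_tmul_one (b : Module.Basis ι A B) (c : Module.Basis κ A C)
    (th : {t : κ × ι → D // Sol b c t}) (x : C) :
    solEquivHom b c th (x ⊗ₜ[A] 1) = fSol b c th.2 x := by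
  show liftRight (fSol b c th.2) (x ⊗ₜ[A] 1) = _
  rw [liftRight_tmul_one]

end CorepAux4


namespace CorepAux5

open MvPolynomial

variable {A : Type u} [CommRing A]

/-- homs out of a quotient are homs killing the ideal -/
noncomputable def quotEquiv {R : Type u} [CommRing R] [Algebra A R] (I : Ideal R)
    (D : Type u) [CommRing D] [Algebra A D] :
    ((R ⧸ I) →ₐ[A] D) ≃ {g : R →ₐ[A] D // ∀ a ∈ I, g a = 0} where
  toFun ψ := ⟨ψ.comp (Ideal.Quotient.mkₐ A I), fun a ha => by
    rw [AlgHom.comp_apply, Ideal.Quotient.mkₐ_eq_mk,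
      Ideal.Quotient.eq_zero_iff_mem.2 ha, map_zero]⟩
  invFun g := Ideal.Quotient.liftₐ I g.1 g.2
  left_inv ψ := Ideal.Quotient.algHom_ext A (Ideal.Quotient.liftₐ_comp I _ _)
  right_inv g := Subtype.ext (Ideal.Quotient.liftₐ_comp I g.1 g.2)

lemma quotEquiv_symm_mk {R : Type u} [CommRing R] [Algebra A R] (I : Ideal R)
    (D : Type u) [CommRing D] [Algebra A D] (g : {g : R →ₐ[A] D // ∀ a ∈ I, g a = 0})
    (r : R) : (quotEquiv I D).symm g (Ideal.Quotient.mkₐ A I r) = g.1 r :=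
  DFunLike.congr_fun (Ideal.Quotient.liftₐ_comp I g.1 g.2) r

variable {σ τ ν : Type} [Fintype σ] [Fintype τ]

/-- renaming variables and evaluating -/
noncomputable def varEquiv (q : τ → MvPolynomial σ A) (eqv : σ ≃ ν)
    (D : Type u) [CommRing D] [Algebra A D] :
    {g : MvPolynomial ν A →ₐ[A] D //
        ∀ a ∈ Ideal.span (Set.range fun l => rename eqv (q l)), g a = 0} ≃
      {t : σ → D // ∀ l, aeval t (q l) = 0} where
  toFun g := ⟨fun x => g.1 (X (eqv x)), by
    intro l
    have h : (aeval (fun x => g.1 (X (eqv x))) : MvPolynomial σ A →ₐ[A] D) =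
        g.1.comp (rename eqv) := by
      apply MvPolynomial.algHom_ext
      intro x
      simp
    rw [h, AlgHom.comp_apply]
    exact g.2 _ (Ideal.subset_span ⟨l, rfl⟩)⟩
  invFun t := ⟨(aeval t.1).comp (rename (eqv.symm : ν ≃ σ)), by
    intro a ha
    refine Submodule.span_induction ?_ ?_ ?_ ?_ ha
    · rintro x ⟨l, rfl⟩
      rw [AlgHom.comp_apply, rename_rename]
      have : (eqv.symm : ν → σ) ∘ eqv = id := by
        funext x; simp
      rw [this, rename_id]
      exact t.2 l
    · exact map_zero _
    · intro x y _ _ hx hy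
      rw [map_add, hx, hy, add_zero]
    · intro r x _ hx
      rw [smul_eq_mul, map_mul, hx, mul_zero]⟩
  left_inv g := by
    apply Subtype.ext
    apply MvPolynomial.algHom_ext
    intro v
    simp
  right_inv t := by
    apply Subtype.ext
    funext x
    simp

/-- Engine: the functor of solution sets of a finite polynomial system is corepresentable
by a finitely presented algebra with `Fin n` variables. -/
theorem engine (q : τ → MvPolynomial σ A) :
    ∃ (n : ℕ) (I : Ideal (MvPolynomial (Fin n) A)), I.FG ∧
      ∃ e : ∀ (D : Type u) [CommRing D] [Algebra A D],
          ((MvPolynomial (Fin n) A ⧸ I) →ₐ[A] D) ≃ {t : σ → D // ∀ l, aeval t (q l) = 0},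
        ∀ (D : Type u) [CommRing D] [Algebra A D] (D' : Type u) [CommRing D'] [Algebra A D']
          (φ : D →ₐ[A] D') (ψ : (MvPolynomial (Fin n) A ⧸ I) →ₐ[A] D),
          ((e D' (φ.comp ψ)).1 : σ → D') = φ ∘ ((e D ψ).1 : σ → D) := by
  classical
  set n := Fintype.card σ with hn
  set eqv := Fintype.equivFin σ with heqv
  refine ⟨n, Ideal.span (Set.range fun l => rename eqv (q l)),
    Submodule.fg_span (Set.finite_range _), ?_⟩
  refine ⟨fun D _ _ => (quotEquiv _ D).trans (varEquiv q eqv D), ?_⟩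
  intro D _ _ D' _ _ φ ψ
  funext x
  rfl

end CorepAux5

namespace CorepAux6

open MvPolynomial CorepAux CorepAux2 CorepAux3 CorepAux4 CorepAux5

variable {A : Type u} [CommRing A]
variable {B : Type u} [CommRing B] [Algebra A B]
variable {C : Type u} [CommRing C] [Algebra A C]
variable {ι κ : Type} [Fintype ι] [DecidableEq ι] [Fintype κ] [DecidableEq κ]

theorem part1 (b : Module.Basis ι A B) (c : Module.Basis κ A C) :
    ∃ (n : ℕ) (I : Ideal (MvPolynomial (Fin n) A)), I.FG ∧
      ∃ e : ∀ (D : Type u) [CommRing D] [Algebra A D],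
          ((MvPolynomial (Fin n) A ⧸ I) →ₐ[A] D) ≃ ((C ⊗[A] D) →ₐ[D] (B ⊗[A] D)),
        ∀ (D : Type u) [CommRing D] [Algebra A D] (D' : Type u) [CommRing D'] [Algebra A D']
          (φ : D →ₐ[A] D') (ψ : (MvPolynomial (Fin n) A ⧸ I) →ₐ[A] D) (c₀ : C),
          e D' (φ.comp ψ) (c₀ ⊗ₜ[A] (1 : D')) =
            Algebra.TensorProduct.map (AlgHom.id A B) φ (e D ψ (c₀ ⊗ₜ[A] (1 : D))) := by
  obtain ⟨n, I, hFG, e0, hnat⟩ := CorepAux5.engine (homPoly b c)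
  refine ⟨n, I, hFG, fun D _ _ => (e0 D).trans (solEquivHom b c), ?_⟩
  intro D _ _ D' _ _ φ ψ c₀
  show solEquivHom b c (e0 D' (φ.comp ψ)) (c₀ ⊗ₜ[A] 1) =
    Algebra.TensorProduct.map (AlgHom.id A B) φ (solEquivHom b c (e0 D ψ) (c₀ ⊗ₜ[A] 1))
  refine (solEquivHom_tmul_one b c (e0 D' (φ.comp ψ)) c₀).trans
    (Eq.trans ?_ (congrArg _ (solEquivHom_tmul_one b c (e0 D ψ) c₀).symm))
  have h2 : e0 D' (φ.comp ψ) = ⟨φ ∘ (e0 D ψ).1, sol_map b c (e0 D ψ).2 φ⟩ :=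
    Subtype.ext (hnat D D' φ ψ)
  rw [h2]
  exact fSol_map b c (e0 D ψ).2 φ c₀

end CorepAux6

namespace CorepAux7

open MvPolynomial CorepAux CorepAux2 CorepAux3 CorepAux4 CorepAux5

variable {A : Type u} [CommRing A]
variable {B : Type u} [CommRing B] [Algebra A B]
variable {C : Type u} [CommRing C] [Algebra A C]
variable {ι κ : Type} [Fintype ι] [DecidableEq ι] [Fintype κ] [DecidableEq κ]
variable {D : Type u} [CommRing D] [Algebra A D]

/-- variable index for the iso functor -/
abbrev isoVar (ι κ : Type) : Type := (κ × ι) ⊕ (ι × κ)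

/-- relation index for the iso functor -/
abbrev isoRel (ι κ : Type) : Type := ((relIdx κ × ι) ⊕ (relIdx ι × κ)) ⊕ ((κ × κ) ⊕ (ι × ι))

/-- defining polynomials of the iso functor -/
noncomputable def isoPoly (b : Module.Basis ι A B) (c : Module.Basis κ A C) :
    isoRel ι κ → MvPolynomial (isoVar ι κ) A :=
  Sum.elim
    (Sum.elim
      (fun l => rename Sum.inl (homPoly b c l))
      (fun l => rename Sum.inr (homPoly c b l)))
    (Sum.elim
      (fun jk => (∑ i, X (Sum.inl (jk.1, i)) * X (Sum.inr (i, jk.2))) -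
        MvPolynomial.C (if jk.1 = jk.2 then 1 else 0))
      (fun ii => (∑ j, X (Sum.inr (ii.1, j)) * X (Sum.inl (j, ii.2))) -
        MvPolynomial.C (if ii.1 = ii.2 then 1 else 0)))

section extract

variable (b : Module.Basis ι A B) (c : Module.Basis κ A C) {w : isoVar ι κ → D}

lemma isol₁ (hw : ∀ l, aeval w (isoPoly b c l) = 0) : Sol b c (w ∘ Sum.inl) := by
  intro l
  have := hw (Sum.inl (Sum.inl l))
  rwa [isoPoly, Sum.elim_inl, Sum.elim_inl, aeval_rename] at this

lemma isol₂ (hw : ∀ l, aeval w (isoPoly b c l) = 0) : Sol c b (w ∘ Sum.inr) := by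
  intro l
  have := hw (Sum.inl (Sum.inr l))
  rwa [isoPoly, Sum.elim_inl, Sum.elim_inr, aeval_rename] at this

lemma isol₃ (hw : ∀ l, aeval w (isoPoly b c l) = 0) (j k : κ) :
    (∑ i, w (Sum.inl (j, i)) * w (Sum.inr (i, k))) = if j = k then (1 : D) else 0 := by
  have := hw (Sum.inr (Sum.inl (j, k)))
  rw [isoPoly, Sum.elim_inr, Sum.elim_inl, map_sub, sub_eq_zero, map_sum] at this
  simp only [map_mul, aeval_X, aeval_C] at this
  rw [this]
  split_ifs <;> simp

lemma isol₄ (hw : ∀ l, aeval w (isoPoly b c l) = 0) (i i' : ι) :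
    (∑ j, w (Sum.inr (i, j)) * w (Sum.inl (j, i'))) = if i = i' then (1 : D) else 0 := by
  have := hw (Sum.inr (Sum.inr (i, i')))
  rw [isoPoly, Sum.elim_inr, Sum.elim_inr, map_sub, sub_eq_zero, map_sum] at this
  simp only [map_mul, aeval_X, aeval_C] at this
  rw [this]
  split_ifs <;> simp

end extract

/-- Expansion of a composite of two `D`-algebra homs on basis tensors. -/
lemma comp_expand (b : Module.Basis ι A B) (c : Module.Basis κ A C)
    (f : C ⊗[A] D →ₐ[D] B ⊗[A] D) (g : B ⊗[A] D →ₐ[D] C ⊗[A] D) (j : κ) :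
    g (f (c j ⊗ₜ[A] 1)) =
      ∑ k, c k ⊗ₜ[A] (∑ i, tOf b c f (j, i) * tOf c b g (i, k)) := by
  rw [← vt_tOf b c f j, vt, map_sum]
  have step : ∀ i, g (b i ⊗ₜ[A] tOf b c f (j, i)) =
      ∑ k, c k ⊗ₜ[A] (tOf b c f (j, i) * tOf c b g (i, k)) := by
    intro i
    have h1 : (b i ⊗ₜ[A] tOf b c f (j, i)) = tOf b c f (j, i) • (b i ⊗ₜ[A] (1 : D)) := by
      rw [smul_right, mul_one]
    rw [h1]
    rw [show g (tOf b c f (j, i) • b i ⊗ₜ[A] (1 : D)) =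
      tOf b c f (j, i) • g (b i ⊗ₜ[A] (1 : D)) from map_smul g.toLinearMap _ _]
    rw [← vt_tOf c b g i, vt, Finset.smul_sum]
    refine Finset.sum_congr rfl fun k _ => ?_
    rw [smul_right]
  rw [Finset.sum_congr rfl fun i _ => step i, Finset.sum_comm]
  exact Finset.sum_congr rfl fun k _ => (tmul_sum _ _ _).symm

lemma sum_delta_tmul (c : Module.Basis κ A C) (j : κ) :
    (∑ k, c k ⊗ₜ[A] (if j = k then (1 : D) else 0)) = c j ⊗ₜ[A] 1 := by
  have : ∀ k, c k ⊗ₜ[A] (if j = k then (1 : D) else 0) =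
      if j = k then c k ⊗ₜ[A] (1 : D) else 0 := by
    intro k
    split_ifs <;> simp
  rw [Finset.sum_congr rfl fun k _ => this k]
  simp

/-- Agreement of `g ∘ f` with the identity on left tensors, given the trace conditions. -/
lemma comp_eq_id (b : Module.Basis ι A B) (c : Module.Basis κ A C)
    (f : C ⊗[A] D →ₐ[D] B ⊗[A] D) (g : B ⊗[A] D →ₐ[D] C ⊗[A] D)
    (h : ∀ j k, (∑ i, tOf b c f (j, i) * tOf c b g (i, k)) = if j = k then (1 : D) else 0) :
    g.comp f = AlgHom.id D (C ⊗[A] D) := by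
  haveI := tower_right (A := A) (C := C) (D := D)
  have hbasis : ∀ j, (g.comp f) (c j ⊗ₜ[A] 1) = c j ⊗ₜ[A] 1 := by
    intro j
    show g (f (c j ⊗ₜ[A] 1)) = _
    rw [comp_expand b c f g j, Finset.sum_congr rfl fun k _ => by rw [h j k],
      sum_delta_tmul]
  have hlin : (resLeft (g.comp f)).toLinearMap =
      (Algebra.TensorProduct.includeLeft (S := A) :
        C →ₐ[A] C ⊗[A] D).toLinearMap := by
    apply c.ext
    intro j
    show resLeft (g.comp f) (c j) = c j ⊗ₜ[A] 1
    rw [resLeft_apply]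
    exact hbasis j
  apply algHom_right_ext
  intro x
  show resLeft (g.comp f) x = x ⊗ₜ[A] 1
  have := DFunLike.congr_fun hlin x
  exact this

lemma tOf_solEquivHom (b : Module.Basis ι A B) (c : Module.Basis κ A C) {t : κ × ι → D} (ht : Sol b c t) :
    tOf b c (solEquivHom b c ⟨t, ht⟩) = t :=
  congrArg Subtype.val ((solEquivHom b c).symm_apply_apply ⟨t, ht⟩)

/-- The equivalence between iso-solutions and `D`-algebra isomorphisms. -/
noncomputable def isoSolEquiv (b : Module.Basis ι A B) (c : Module.Basis κ A C) :
    {w : isoVar ι κ → D // ∀ l, aeval w (isoPoly b c l) = 0} ≃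
      ((C ⊗[A] D) ≃ₐ[D] (B ⊗[A] D)) where
  toFun wh :=
    AlgEquiv.ofAlgHom
      (solEquivHom b c ⟨wh.1 ∘ Sum.inl, isol₁ b c wh.2⟩)
      (solEquivHom c b ⟨wh.1 ∘ Sum.inr, isol₂ b c wh.2⟩)
      (comp_eq_id c b (solEquivHom c b ⟨wh.1 ∘ Sum.inr, isol₂ b c wh.2⟩)
        (solEquivHom b c ⟨wh.1 ∘ Sum.inl, isol₁ b c wh.2⟩)
        (fun i i' => by
          rw [tOf_solEquivHom, tOf_solEquivHom]
          exact isol₄ b c wh.2 i i'))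
      (comp_eq_id b c (solEquivHom b c ⟨wh.1 ∘ Sum.inl, isol₁ b c wh.2⟩)
        (solEquivHom c b ⟨wh.1 ∘ Sum.inr, isol₂ b c wh.2⟩)
        (fun j k => by
          rw [tOf_solEquivHom, tOf_solEquivHom]
          exact isol₃ b c wh.2 j k))
  invFun E := ⟨Sum.elim (tOf b c E.toAlgHom) (tOf c b E.symm.toAlgHom), by
    have key : ∀ j k, (∑ i, tOf b c E.toAlgHom (j, i) * tOf c b E.symm.toAlgHom (i, k)) =
        if j = k then (1 : D) else 0 := by
      intro j k
      have h1 := comp_expand b c E.toAlgHom E.symm.toAlgHom j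
      have h2 : E.symm.toAlgHom (E.toAlgHom (c j ⊗ₜ[A] 1)) = c j ⊗ₜ[A] 1 :=
        E.symm_apply_apply _
      rw [h2, ← sum_delta_tmul c j] at h1
      have h3 := congrArg (co c k) h1
      rw [co_sum, co_sum] at h3
      exact h3.symm
    have key' : ∀ i i', (∑ j, tOf c b E.symm.toAlgHom (i, j) * tOf b c E.toAlgHom (j, i')) =
        if i = i' then (1 : D) else 0 := by
      intro i i'
      have h1 := comp_expand c b E.symm.toAlgHom E.toAlgHom i
      have h2 : E.toAlgHom (E.symm.toAlgHom (b i ⊗ₜ[A] 1)) = b i ⊗ₜ[A] 1 :=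
        E.apply_symm_apply _
      rw [h2, ← sum_delta_tmul b i] at h1
      have h3 := congrArg (co b i') h1
      rw [co_sum, co_sum] at h3
      exact h3.symm
    rintro ((l | l) | (⟨j, k⟩ | ⟨i, i'⟩))
    · rw [isoPoly, Sum.elim_inl, Sum.elim_inl, aeval_rename]
      exact sol_tOf b c E.toAlgHom l
    · rw [isoPoly, Sum.elim_inl, Sum.elim_inr, aeval_rename]
      exact sol_tOf c b E.symm.toAlgHom l
    · rw [isoPoly, Sum.elim_inr, Sum.elim_inl, map_sub, sub_eq_zero, map_sum]
      simp only [map_mul, aeval_X, aeval_C, Sum.elim_inl, Sum.elim_inr]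
      rw [key j k]
      split_ifs <;> simp
    · rw [isoPoly, Sum.elim_inr, Sum.elim_inr, map_sub, sub_eq_zero, map_sum]
      simp only [map_mul, aeval_X, aeval_C, Sum.elim_inl, Sum.elim_inr]
      rw [key' i i']
      split_ifs <;> simp⟩
  left_inv := by
    rintro ⟨w, hw⟩
    apply Subtype.ext
    funext x
    cases x with
    | inl ji =>
        show tOf b c (solEquivHom b c ⟨w ∘ Sum.inl, isol₁ b c hw⟩) ji = w (Sum.inl ji)
        rw [tOf_solEquivHom]
        rfl
    | inr ij =>
        show tOf c b (solEquivHom c b ⟨w ∘ Sum.inr, isol₂ b c hw⟩) ij = w (Sum.inr ij)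
        rw [tOf_solEquivHom]
        rfl
  right_inv := by
    intro E
    apply AlgEquiv.ext
    intro x
    exact DFunLike.congr_fun ((solEquivHom b c).apply_symm_apply E.toAlgHom) x

lemma isoSolEquiv_tmul_one (b : Module.Basis ι A B) (c : Module.Basis κ A C)
    (wh : {w : isoVar ι κ → D // ∀ l, aeval w (isoPoly b c l) = 0}) (x : C) :
    isoSolEquiv b c wh (x ⊗ₜ[A] 1) = fSol b c (isol₁ b c wh.2) x := by
  show solEquivHom b c ⟨wh.1 ∘ Sum.inl, isol₁ b c wh.2⟩ (x ⊗ₜ[A] 1) = _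
  rw [solEquivHom_tmul_one]

end CorepAux7

namespace CorepAux8

open MvPolynomial CorepAux CorepAux2 CorepAux3 CorepAux4 CorepAux5 CorepAux7

variable {A : Type u} [CommRing A]
variable {B : Type u} [CommRing B] [Algebra A B]
variable {C : Type u} [CommRing C] [Algebra A C]
variable {ι κ : Type} [Fintype ι] [DecidableEq ι] [Fintype κ] [DecidableEq κ]

lemma fSol_congr (b : Module.Basis ι A B) (c : Module.Basis κ A C) {D : Type u} [CommRing D] [Algebra A D]
    {t₁ t₂ : κ × ι → D} (h : t₁ = t₂) (h₁ : Sol b c t₁) (h₂ : Sol b c t₂) (x : C) :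
    fSol b c h₁ x = fSol b c h₂ x := by cases h; rfl

theorem part2 (b : Module.Basis ι A B) (c : Module.Basis κ A C) :
    ∃ (n : ℕ) (I : Ideal (MvPolynomial (Fin n) A)), I.FG ∧
      ∃ e : ∀ (D : Type u) [CommRing D] [Algebra A D],
          ((MvPolynomial (Fin n) A ⧸ I) →ₐ[A] D) ≃ ((C ⊗[A] D) ≃ₐ[D] (B ⊗[A] D)),
        ∀ (D : Type u) [CommRing D] [Algebra A D] (D' : Type u) [CommRing D'] [Algebra A D']
          (φ : D →ₐ[A] D') (ψ : (MvPolynomial (Fin n) A ⧸ I) →ₐ[A] D) (c₀ : C),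
          e D' (φ.comp ψ) (c₀ ⊗ₜ[A] (1 : D')) =
            Algebra.TensorProduct.map (AlgHom.id A B) φ (e D ψ (c₀ ⊗ₜ[A] (1 : D))) := by
  obtain ⟨n, I, hFG, e0, hnat⟩ := CorepAux5.engine (isoPoly b c)
  refine ⟨n, I, hFG, fun D _ _ => (e0 D).trans (isoSolEquiv b c), ?_⟩
  intro D _ _ D' _ _ φ ψ c₀
  show isoSolEquiv b c (e0 D' (φ.comp ψ)) (c₀ ⊗ₜ[A] 1) =
    Algebra.TensorProduct.map (AlgHom.id A B) φ (isoSolEquiv b c (e0 D ψ) (c₀ ⊗ₜ[A] 1))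
  rw [isoSolEquiv_tmul_one, isoSolEquiv_tmul_one]
  have hw : (e0 D' (φ.comp ψ)).1 = φ ∘ (e0 D ψ).1 := hnat D D' φ ψ
  have h : ((e0 D' (φ.comp ψ)).1 ∘ Sum.inl : κ × ι → D') =
      φ ∘ ((e0 D ψ).1 ∘ Sum.inl) := by rw [hw]; rfl
  rw [fSol_congr b c h _ (sol_map b c (isol₁ b c (e0 D ψ).2) φ)]
  exact fSol_map b c (isol₁ b c (e0 D ψ).2) φ c₀

end CorepAux8

/-- Let `A` be a commutative ring and `B`, `C` commutative `A`-algebras that are finite free as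
`A`-modules.  Then the functor `D ↦ Hom_{D-alg}(C ⊗[A] D, B ⊗[A] D)` is corepresentable by a
finitely presented commutative `A`-algebra (presented as a quotient of a polynomial ring by a
finitely generated ideal), naturally in `D`; and likewise for the subfunctor of isomorphisms. -/
theorem hom_and_iso_functors_corepresentable (A : Type u) [CommRing A]
    (B C : Type u) [CommRing B] [CommRing C] [Algebra A B] [Algebra A C]
    [Module.Finite A B] [Module.Free A B] [Module.Finite A C] [Module.Free A C] :
    (∃ (n : ℕ) (I : Ideal (MvPolynomial (Fin n) A)), I.FG ∧
      ∃ e : ∀ (D : Type u) [CommRing D] [Algebra A D],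
          ((MvPolynomial (Fin n) A ⧸ I) →ₐ[A] D) ≃ ((C ⊗[A] D) →ₐ[D] (B ⊗[A] D)),
        ∀ (D : Type u) [CommRing D] [Algebra A D] (D' : Type u) [CommRing D'] [Algebra A D']
          (φ : D →ₐ[A] D') (ψ : (MvPolynomial (Fin n) A ⧸ I) →ₐ[A] D) (c : C),
          e D' (φ.comp ψ) (c ⊗ₜ[A] (1 : D')) =
            Algebra.TensorProduct.map (AlgHom.id A B) φ (e D ψ (c ⊗ₜ[A] (1 : D)))) ∧
    (∃ (n : ℕ) (I : Ideal (MvPolynomial (Fin n) A)), I.FG ∧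
      ∃ e : ∀ (D : Type u) [CommRing D] [Algebra A D],
          ((MvPolynomial (Fin n) A ⧸ I) →ₐ[A] D) ≃ ((C ⊗[A] D) ≃ₐ[D] (B ⊗[A] D)),
        ∀ (D : Type u) [CommRing D] [Algebra A D] (D' : Type u) [CommRing D'] [Algebra A D']
          (φ : D →ₐ[A] D') (ψ : (MvPolynomial (Fin n) A ⧸ I) →ₐ[A] D) (c : C),
          e D' (φ.comp ψ) (c ⊗ₜ[A] (1 : D')) =
            Algebra.TensorProduct.map (AlgHom.id A B) φ (e D ψ (c ⊗ₜ[A] (1 : D)))) := by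
  classical
  let b := (Module.Free.chooseBasis A B).reindex
    (Fintype.equivFin (Module.Free.ChooseBasisIndex A B))
  let c := (Module.Free.chooseBasis A C).reindex
    (Fintype.equivFin (Module.Free.ChooseBasisIndex A C))
  exact ⟨CorepAux6.part1 b c, CorepAux8.part2 b c⟩
end

section
/- Let (R, m) be a Noetherian local ring with residue field k = R/m, and let A be a commutative R-algebra that is finite and flat as an R-module. If the k-algebra A ⊗_R k is étale over k, then A is étale over R. -/
open TensorProduct

attribute [local instance] Algebra.TensorProduct.rightAlgebra

universe u

set_option maxHeartbeats 1000000 in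
/-- A formally unramified, essentially of finite type algebra which is projective as a module
is formally smooth. -/
theorem Algebra.FormallySmooth.of_unramified_of_projective
    (R A : Type u) [CommRing R] [CommRing A] [Algebra R A]
    [Algebra.FormallyUnramified R A] [Algebra.EssFiniteType R A] [Module.Projective R A] :
    Algebra.FormallySmooth R A := by
  obtain ⟨t, ht1, ht2⟩ :=
    (Algebra.FormallyUnramified.iff_exists_tensorProduct (R := R) (S := A)).mp ‹_›
  refine Algebra.FormallySmooth.of_comp_surjective ?_
  intro B _ _ I hI f
  classical
  -- Notation
  set π : A ⊗[R] B →ₐ[R] A ⊗[R] (B ⧸ I) :=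
    Algebra.TensorProduct.map (AlgHom.id R A) (Ideal.Quotient.mkₐ R I) with hπdef
  set μ : A ⊗[R] (B ⧸ I) →ₐ[R] B ⧸ I :=
    Algebra.TensorProduct.lift f (AlgHom.id R (B ⧸ I)) (fun _ _ => mul_comm _ _) with hμdef
  have hμ_tmul : ∀ (a : A) (b : B ⧸ I), μ (a ⊗ₜ b) = f a * b := by
    intro a b
    rw [hμdef]; rfl
  -- surjectivity of π
  have hπ_surj : Function.Surjective π := by
    intro x
    induction x using TensorProduct.induction_on with
    | zero => exact ⟨0, map_zero _⟩
    | tmul a b =>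
      obtain ⟨b', rfl⟩ := Ideal.Quotient.mk_surjective b
      exact ⟨a ⊗ₜ b', by simp [hπdef]⟩
    | add x y hx hy =>
      obtain ⟨x', hx'⟩ := hx
      obtain ⟨y', hy'⟩ := hy
      exact ⟨x' + y', by simp [hx', hy']⟩
  -- the kernel of π is square-zero
  have hker : RingHom.ker π =
      I.map (Algebra.TensorProduct.includeRight : B →ₐ[R] A ⊗[R] B) := by
    rw [hπdef, Algebra.TensorProduct.lTensor_ker _ Ideal.Quotient.mk_surjective]
    congr 1
    exact Ideal.Quotient.mkₐ_ker R I
  have hNN : ∀ x y : A ⊗[R] B, π x = 0 → π y = 0 → x * y = 0 := by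
    intro x y hx hy
    have hx' : x ∈ RingHom.ker π := hx
    have hy' : y ∈ RingHom.ker π := hy
    rw [hker] at hx' hy'
    have : x * y ∈ (I.map (Algebra.TensorProduct.includeRight : B →ₐ[R] A ⊗[R] B)) *
        (I.map (Algebra.TensorProduct.includeRight : B →ₐ[R] A ⊗[R] B)) :=
      Ideal.mul_mem_mul hx' hy'
    rw [← Ideal.map_mul, ← pow_two, hI, Ideal.map_bot] at this
    simpa using this
  -- the separability idempotent downstairs
  set e : A ⊗[R] (B ⧸ I) := Algebra.TensorProduct.map (AlgHom.id R A) f t with hedef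
  have he_mul : ∀ a : A, (a ⊗ₜ[R] (1 : B ⧸ I)) * e = ((1 : A) ⊗ₜ[R] f a) * e := by
    intro a
    have := congrArg (Algebra.TensorProduct.map (AlgHom.id R A) f) (ht1 a)
    rw [map_mul, map_sub] at this
    simp only [Algebra.TensorProduct.map_tmul, AlgHom.coe_id, id_eq, map_one] at this
    rw [map_zero, sub_mul, sub_eq_zero] at this
    rw [hedef]
    exact this.symm
  have hμe : μ e = 1 := by
    have hcomp : (μ.comp (Algebra.TensorProduct.map (AlgHom.id R A) f)) =
        f.comp (Algebra.TensorProduct.lmul' R (S := A)) := by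
      apply Algebra.TensorProduct.ext
      · ext a
        simp [hμ_tmul]
      · ext a
        simp [hμ_tmul]
    have := congrArg (fun g : (A ⊗[R] A) →ₐ[R] (B ⧸ I) => g t) hcomp
    simp only [AlgHom.comp_apply] at this
    rw [hedef, this, ht2, map_one]
  have hkey : ∀ c : A ⊗[R] (B ⧸ I), c * e = ((1 : A) ⊗ₜ[R] μ c) * e := by
    intro c
    induction c using TensorProduct.induction_on with
    | zero => simp only [map_zero, TensorProduct.tmul_zero, zero_mul]
    | tmul a b =>
      have : (a ⊗ₜ[R] b) = ((1 : A) ⊗ₜ[R] b) * (a ⊗ₜ[R] (1 : B ⧸ I)) := by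
        simp
      rw [this, mul_assoc, he_mul a, ← mul_assoc]
      simp [hμ_tmul, mul_comm]
    | add x y hx hy =>
      rw [map_add, add_mul, hx, hy, TensorProduct.tmul_add, add_mul]
  have he_idem : e * e = e := by
    rw [hkey e, hμe, ← Algebra.TensorProduct.one_def, one_mul]
  -- lift e to an idempotent upstairs
  obtain ⟨c, hc⟩ := hπ_surj e
  have hd : π (c ^ 2 - c) = 0 := by
    rw [map_sub, map_pow, hc, pow_two, he_idem, sub_self]
  set E : A ⊗[R] B := 3 * c ^ 2 - 2 * c ^ 3 with hEdef
  have hπE : π E = e := by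
    have : π E = 3 * e ^ 2 - 2 * e ^ 3 := by
      rw [hEdef]; push_cast [map_sub, map_mul, map_pow, map_ofNat, hc]; ring_nf
    rw [this, pow_two, he_idem, pow_succ, pow_two, he_idem, he_idem]
    ring
  have hdd : (c ^ 2 - c) * (c ^ 2 - c) = 0 := hNN _ _ hd hd
  have hE_idem : E * E = E := by
    rw [hEdef]
    linear_combination (4 * c ^ 2 - 4 * c - 3) * hdd
  -- the sublemma: multiplying kernel elements by E lands in E * (1 ⊗ I)
  have hL : ∀ x : A ⊗[R] B, π x = 0 → ∃ b ∈ I, E * x = E * ((1 : A) ⊗ₜ[R] b) := by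
    intro x hx
    have hx' : x ∈ I.map (Algebra.TensorProduct.includeRight : B →ₐ[R] A ⊗[R] B) := by
      rw [← hker]; exact hx
    rw [Ideal.map, Ideal.span] at hx'
    refine Submodule.span_induction ?_ ?_ ?_ ?_ hx'
    · rintro _ ⟨j, hj, rfl⟩
      exact ⟨j, hj, rfl⟩
    · exact ⟨0, I.zero_mem, by simp⟩
    · rintro x y hxmem hymem ⟨b₁, hb₁, h₁⟩ ⟨b₂, hb₂, h₂⟩
      exact ⟨b₁ + b₂, I.add_mem hb₁ hb₂, by rw [mul_add, h₁, h₂, TensorProduct.tmul_add, mul_add]⟩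
    · rintro cc x hxmem ⟨b, hb, hbe⟩
      obtain ⟨b₁, hb₁⟩ := Ideal.Quotient.mk_surjective (μ (π cc))
      refine ⟨b₁ * b, I.mul_mem_left b₁ hb, ?_⟩
      have h1b : π ((1 : A) ⊗ₜ[R] b) = 0 := by
        have : (Ideal.Quotient.mk I) b = 0 := Ideal.Quotient.eq_zero_iff_mem.mpr hb
        simp [hπdef, this]
      have hdiff : π (cc * E - ((1 : A) ⊗ₜ[R] b₁) * E) = 0 := by
        rw [map_sub, map_mul, map_mul, hπE]
        simp only [hπdef, Algebra.TensorProduct.map_tmul, AlgHom.coe_id, id_eq, map_one,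
          Ideal.Quotient.mkₐ_eq_mk, hb₁]
        rw [← hπdef, hkey (π cc), sub_self]
      have hz : (cc * E - ((1 : A) ⊗ₜ[R] b₁) * E) * ((1 : A) ⊗ₜ[R] b) = 0 :=
        hNN _ _ hdiff h1b
      have : cc * E * ((1 : A) ⊗ₜ[R] b) = ((1 : A) ⊗ₜ[R] b₁) * E * ((1 : A) ⊗ₜ[R] b) := by
        rw [← sub_eq_zero, ← sub_mul]; exact hz
      calc E * (cc • x) = cc * (E * x) := by
            rw [smul_eq_mul]; ring
        _ = cc * (E * ((1 : A) ⊗ₜ[R] b)) := by rw [hbe]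
        _ = cc * E * ((1 : A) ⊗ₜ[R] b) := by ring
        _ = ((1 : A) ⊗ₜ[R] b₁) * E * ((1 : A) ⊗ₜ[R] b) := this
        _ = E * (((1 : A) ⊗ₜ[R] b₁) * ((1 : A) ⊗ₜ[R] b)) := by ring
        _ = E * ((1 : A) ⊗ₜ[R] (b₁ * b)) := by
            rw [Algebra.TensorProduct.tmul_mul_tmul, one_mul]
  -- injectivity
  obtain ⟨g, hg⟩ := Module.projective_lifting_property
    (Ideal.Quotient.mkₐ R I).toLinearMap f.toLinearMap Ideal.Quotient.mk_surjective
  set G : A ⊗[R] B →ₗ[R] B := _root_.TensorProduct.lift ((LinearMap.mul R B).comp g) with hGdef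
  have hG_tmul : ∀ (a : A) (b : B), G (a ⊗ₜ[R] b) = g a * b := by
    intro a b
    rw [hGdef]
    simp only [_root_.TensorProduct.lift.tmul, LinearMap.coe_comp, Function.comp_apply,
      LinearMap.mul_apply']
  have hG_mul : ∀ (x : A ⊗[R] B) (b : B), G (x * ((1 : A) ⊗ₜ[R] b)) = G x * b := by
    intro x b
    induction x using TensorProduct.induction_on with
    | zero => rw [zero_mul, map_zero, zero_mul]
    | tmul a b' =>
      rw [Algebra.TensorProduct.tmul_mul_tmul, mul_one, hG_tmul, hG_tmul, mul_assoc]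
    | add x y hx hy => rw [add_mul, map_add, hx, hy, map_add, add_mul]
  have hmkG : ∀ x : A ⊗[R] B, Ideal.Quotient.mk I (G x) = μ (π x) := by
    intro x
    induction x using TensorProduct.induction_on with
    | zero => simp
    | tmul a b =>
      rw [hG_tmul, map_mul]
      have : Ideal.Quotient.mk I (g a) = f a := by
        have := congrArg (fun h : A →ₗ[R] B ⧸ I => h a) hg
        simpa using this
      simp [hπdef, this, hμ_tmul]
    | add x y hx hy => simp [map_add, hx, hy]
  have hβ : Ideal.Quotient.mk I (G E) = 1 := by rw [hmkG, hπE, hμe]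
  have hεε : (G E - 1) * (G E - 1) = 0 := by
    have hmem : G E - 1 ∈ I := by
      rw [← Ideal.Quotient.eq_zero_iff_mem, map_sub, hβ, map_one, sub_self]
    have : (G E - 1) * (G E - 1) ∈ I ^ 2 := by
      rw [pow_two]; exact Ideal.mul_mem_mul hmem hmem
    rw [hI] at this
    simpa using this
  have hinj0 : ∀ b : B, E * ((1 : A) ⊗ₜ[R] b) = 0 → b = 0 := by
    intro b hb
    have hGb : G E * b = 0 := by rw [← hG_mul, hb, map_zero]
    linear_combination (2 - G E) * hGb + b * hεε
  have hinj : ∀ b b' : B, E * ((1 : A) ⊗ₜ[R] b) = E * ((1 : A) ⊗ₜ[R] b') → b = b' := by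
    intro b b' hbb
    have : E * ((1 : A) ⊗ₜ[R] (b - b')) = 0 := by
      rw [TensorProduct.tmul_sub, mul_sub, hbb, sub_self]
    exact sub_eq_zero.mp (hinj0 _ this)
  -- surjectivity onto E * (a ⊗ 1)
  have hsurj : ∀ a : A, ∃ b : B, E * (a ⊗ₜ[R] (1 : B)) = E * ((1 : A) ⊗ₜ[R] b) ∧
      Ideal.Quotient.mk I b = f a := by
    intro a
    obtain ⟨b₀, hb₀⟩ := Ideal.Quotient.mk_surjective (f a)
    have hx : π (E * (a ⊗ₜ[R] (1 : B)) - E * ((1 : A) ⊗ₜ[R] b₀)) = 0 := by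
      rw [map_sub, map_mul, map_mul, hπE]
      simp only [hπdef, Algebra.TensorProduct.map_tmul, AlgHom.coe_id, id_eq, map_one,
        Ideal.Quotient.mkₐ_eq_mk, hb₀]
      rw [mul_comm e _, mul_comm e _, he_mul a, sub_self]
    obtain ⟨b', hb', hEb'⟩ := hL _ hx
    have hEfix : E * (E * (a ⊗ₜ[R] (1 : B)) - E * ((1 : A) ⊗ₜ[R] b₀)) =
        E * (a ⊗ₜ[R] (1 : B)) - E * ((1 : A) ⊗ₜ[R] b₀) := by
      rw [mul_sub, ← mul_assoc, ← mul_assoc, hE_idem]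
    refine ⟨b₀ + b', ?_, ?_⟩
    · rw [TensorProduct.tmul_add, mul_add]
      rw [hEfix] at hEb'
      rw [← hEb']
      ring
    · rw [map_add, hb₀, Ideal.Quotient.eq_zero_iff_mem.mpr hb', add_zero]
  -- construct the lift
  choose ℓ hℓ1 hℓ2 using hsurj
  have key : ∀ a : A, E * ((1 : A) ⊗ₜ[R] ℓ a) = E * (a ⊗ₜ[R] (1 : B)) := fun a => (hℓ1 a).symm
  have hmul_tmul : ∀ (a a' : A), E * ((a * a') ⊗ₜ[R] (1 : B)) =
      (E * (a ⊗ₜ[R] (1 : B))) * (E * (a' ⊗ₜ[R] (1 : B))) := by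
    intro a a'
    symm
    calc (E * (a ⊗ₜ[R] (1 : B))) * (E * (a' ⊗ₜ[R] (1 : B)))
        = (E * E) * ((a ⊗ₜ[R] (1 : B)) * (a' ⊗ₜ[R] (1 : B))) := by ring
      _ = E * ((a * a') ⊗ₜ[R] (1 : B)) := by
          rw [hE_idem, Algebra.TensorProduct.tmul_mul_tmul, mul_one]
  refine ⟨⟨⟨⟨⟨ℓ, ?_⟩, ?_⟩, ?_, ?_⟩, ?_⟩, ?_⟩
  · -- map_one
    apply hinj
    exact key 1
  · -- map_mul
    intro a a'
    apply hinj
    rw [key (a * a'), hmul_tmul, ← key a, ← key a']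
    rw [show ((1 : A) ⊗ₜ[R] (ℓ a * ℓ a')) = ((1 : A) ⊗ₜ[R] ℓ a) * ((1 : A) ⊗ₜ[R] ℓ a') by
      rw [Algebra.TensorProduct.tmul_mul_tmul, one_mul]]
    rw [show (E * ((1 : A) ⊗ₜ[R] ℓ a)) * (E * ((1 : A) ⊗ₜ[R] ℓ a')) =
      (E * E) * (((1 : A) ⊗ₜ[R] ℓ a) * ((1 : A) ⊗ₜ[R] ℓ a')) from by ring, hE_idem]
  · -- map_zero
    apply hinj
    rw [key 0]
    simp
  · -- map_add
    intro a a'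
    apply hinj
    rw [key (a + a'), TensorProduct.add_tmul, TensorProduct.tmul_add, mul_add, mul_add,
      key a, key a']
  · -- commutes
    intro r
    apply hinj
    show E * ((1 : A) ⊗ₜ[R] ℓ (algebraMap R A r)) = E * ((1 : A) ⊗ₜ[R] algebraMap R B r)
    rw [key (algebraMap R A r)]
    congr 1
    rw [Algebra.algebraMap_eq_smul_one, Algebra.algebraMap_eq_smul_one,
      TensorProduct.smul_tmul]
  · -- lifts f
    ext a
    exact hℓ2 a

/-- Let `(R, m)` be a Noetherian local ring with residue field `k = R/m` and `A` a commutative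
`R`-algebra that is finite and flat as an `R`-module.  If the `k`-algebra `A ⊗[R] k` is étale
over `k`, then `A` is étale over `R`. -/
theorem etale_of_etale_fibre (R : Type u) [CommRing R] [IsLocalRing R] [IsNoetherianRing R]
    (A : Type u) [CommRing A] [Algebra R A] [Module.Finite R A] [Module.Flat R A]
    (h : Algebra.Etale (IsLocalRing.ResidueField R) (A ⊗[R] IsLocalRing.ResidueField R)) :
    Algebra.Etale R A := by
  set k := IsLocalRing.ResidueField R
  have hfp : Module.FinitePresentation R A := Module.finitePresentation_of_finite R A
  have hfree : Module.Free R A := Module.free_of_flat_of_isLocalRing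
  have hproj : Module.Projective R A := Module.Projective.of_free
  have hft : Algebra.FiniteType R A := Module.Finite.finiteType A
  have heft : Algebra.EssFiniteType R A := Algebra.EssFiniteType.of_finiteType R A
  have hafp : Algebra.FinitePresentation R A := Algebra.FinitePresentation.of_finiteType.mp hft
  -- Kaehler differentials vanish
  have hsub : Subsingleton (Ω[A⁄R]) := by
    haveI := h.formallyEtale
    haveI h1 : Algebra.FormallyUnramified k (A ⊗[R] k) := inferInstance
    have h2 : Subsingleton (k ⊗[R] Ω[A⁄R]) :=
      (KaehlerDifferential.tensorKaehlerEquivBase R k A (A ⊗[R] k)).toEquiv.subsingleton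
    have h3 : Module.Finite A (Ω[A⁄R]) := KaehlerDifferential.finite R A
    have h4 : Module.Finite R (Ω[A⁄R]) := Module.Finite.trans A (Ω[A⁄R])
    exact (IsLocalRing.subsingleton_tensorProduct (R := R)).mp h2
  have hunram : Algebra.FormallyUnramified R A := ⟨hsub⟩
  have hsmooth : Algebra.FormallySmooth R A :=
    Algebra.FormallySmooth.of_unramified_of_projective R A
  exact ⟨Algebra.FormallyEtale.iff_formallyUnramified_and_formallySmooth.mpr ⟨hunram, hsmooth⟩, hafp⟩
end

section
/- Let R be a commutative ring, let f_1, …, f_r ∈ R be elements generating the unit ideal, and let I ⊆ R[x] be an ideal of the polynomial ring in one variable such that, for every i, the ideal generated by the image of I in the localized polynomial ring R_{f_i}[x] contains a monic polynomial. Then I contains a monic polynomial. -/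
universe u

open Polynomial

/-- Clearing denominators: every element of the image ideal in the localized polynomial ring
comes from an element of `I` up to a power of `f`. -/
lemma exists_denom_clear {R : Type u} [CommRing R] (f : R) (I : Ideal (Polynomial R))
    {q : Polynomial (Localization.Away f)}
    (hq : q ∈ I.map (Polynomial.mapRingHom (algebraMap R (Localization.Away f)))) :
    ∃ p ∈ I, ∃ n : ℕ,
      p.map (algebraMap R (Localization.Away f)) =
        Polynomial.C (algebraMap R (Localization.Away f) (f ^ n)) * q := by
  set S := Localization.Away f
  set φ := Polynomial.mapRingHom (algebraMap R S) with hφ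
  have hq' : q ∈ Ideal.span (φ '' I) := hq
  refine Submodule.span_induction ?_ ?_ ?_ ?_ hq'
  · rintro x ⟨p, hp, rfl⟩
    exact ⟨p, hp, 0, by simp [φ]; rfl⟩
  · exact ⟨0, I.zero_mem, 0, by simp⟩
  · rintro x y - - ⟨p₁, hp₁, n₁, h₁⟩ ⟨p₂, hp₂, n₂, h₂⟩
    refine ⟨Polynomial.C (f ^ n₂) * p₁ + Polynomial.C (f ^ n₁) * p₂,
      I.add_mem (I.mul_mem_left _ hp₁) (I.mul_mem_left _ hp₂), n₁ + n₂, ?_⟩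
    simp only [Polynomial.map_add, Polynomial.map_mul, Polynomial.map_C, h₁, h₂,
      pow_add, map_mul]
    ring
  · rintro a x - ⟨p, hp, n, hx⟩
    obtain ⟨⟨b, m, rfl⟩, hb⟩ :=
      IsLocalization.integerNormalization_map_to_map (Submonoid.powers f) a
    refine ⟨IsLocalization.integerNormalization (Submonoid.powers f) a * p,
      I.mul_mem_left _ hp, n + m, ?_⟩
    have hsm : ((f ^ m : R) • a) = Polynomial.C (algebraMap R S (f ^ m)) * a := by
      rw [← algebraMap_smul S (f ^ m) a, Polynomial.smul_eq_C_mul]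
    rw [smul_eq_mul, Polynomial.map_mul, hx, hb, hsm]
    simp only [pow_add, map_mul, Polynomial.C_mul]
    ring

/-- From a monic element of the image ideal, produce an element of `I` whose top coefficient
is a power of `f`. -/
lemma exists_coeff_pow {R : Type u} [CommRing R] (f : R) (I : Ideal (Polynomial R))
    (h : ∃ q ∈ I.map (Polynomial.mapRingHom (algebraMap R (Localization.Away f))), q.Monic) :
    ∃ d : ℕ, ∃ k : ℕ, ∃ p ∈ I, p.natDegree ≤ d ∧ p.coeff d = f ^ k := by
  set S := Localization.Away f
  obtain ⟨q, hq, hmon⟩ := h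
  obtain ⟨p, hp, n, hmap⟩ := exists_denom_clear f I hq
  set d := q.natDegree
  -- coefficients of p
  have hcoeff : ∀ j, algebraMap R S (p.coeff j) = algebraMap R S (f ^ n) * q.coeff j := by
    intro j
    have := congrArg (fun t => Polynomial.coeff t j) hmap
    simpa only [Polynomial.coeff_map, Polynomial.coeff_C_mul] using this
  -- high coefficients die
  have hhigh : ∀ j, d < j → ∃ c : Submonoid.powers f, (c : R) * p.coeff j = 0 := by
    intro j hj
    have h0 : algebraMap R S (p.coeff j) = algebraMap R S 0 := by
      rw [hcoeff j, Polynomial.coeff_eq_zero_of_natDegree_lt hj]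
      simp
    obtain ⟨c, hc⟩ := IsLocalization.exists_of_eq (M := Submonoid.powers f) h0
    exact ⟨c, by simpa using hc⟩
  -- leading coefficient
  have hlead : ∃ c : Submonoid.powers f, (c : R) * p.coeff d = (c : R) * f ^ n := by
    have h1 : algebraMap R S (p.coeff d) = algebraMap R S (f ^ n) := by
      rw [hcoeff d, Polynomial.Monic.coeff_natDegree hmon, mul_one]
    exact IsLocalization.exists_of_eq (M := Submonoid.powers f) h1
  obtain ⟨cd, hcd⟩ := hlead
  choose c hc using hhigh
  -- combine multipliers
  set s := Finset.Ioc d p.natDegree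
  set t : Submonoid.powers f := cd * ∏ j ∈ s.attach, c j.1 (Finset.mem_Ioc.mp j.2).1
  obtain ⟨e, he⟩ : ∃ e : ℕ, (t : R) = f ^ e := by
    obtain ⟨e, he⟩ := t.2
    exact ⟨e, he.symm⟩
  refine ⟨d, e + n, Polynomial.C (t : R) * p, I.mul_mem_left _ hp, ?_, ?_⟩
  · -- natDegree bound
    rw [Polynomial.natDegree_le_iff_coeff_eq_zero]
    intro j hj
    rw [Polynomial.coeff_C_mul]
    by_cases hjp : j ≤ p.natDegree
    · have hjs : j ∈ s := Finset.mem_Ioc.mpr ⟨hj, hjp⟩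
      have hdvd : ((c j hj : R)) ∣ (t : R) := by
        have h1 : ((c j hj : R)) ∣
            ∏ k ∈ s.attach, ((c k.1 (Finset.mem_Ioc.mp k.2).1 : Submonoid.powers f) : R) :=
          Finset.dvd_prod_of_mem
            (fun k : {x // x ∈ s} => ((c k.1 (Finset.mem_Ioc.mp k.2).1 : Submonoid.powers f) : R))
            (Finset.mem_attach s ⟨j, hjs⟩)
        have h2 : (t : R) =
            (cd : R) * ∏ k ∈ s.attach, ((c k.1 (Finset.mem_Ioc.mp k.2).1 : Submonoid.powers f) : R) := by
          push_cast [t]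
          rfl
        rw [h2]
        exact Dvd.dvd.mul_left h1 _
      obtain ⟨u, hu⟩ := hdvd
      rw [hu, mul_comm _ u, mul_assoc, hc j hj, mul_zero]
    · rw [Polynomial.coeff_eq_zero_of_natDegree_lt (lt_of_not_ge hjp), mul_zero]
  · rw [Polynomial.coeff_C_mul]
    have : (t : R) * p.coeff d = (t : R) * f ^ n := by
      have ht : (t : R) = (∏ j ∈ s.attach, (c j.1 (Finset.mem_Ioc.mp j.2).1 : R)) * (cd : R) := by
        push_cast [t]
        ring
      rw [ht, mul_assoc, hcd, ← mul_assoc]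
    rw [this, he, ← pow_add]

/-- Let `R` be a commutative ring and `f 0, …, f (r-1)` elements generating the unit ideal.  If
`I ⊆ R[x]` is an ideal such that for every `i` the ideal generated by the image of `I` in the
localized polynomial ring `R_{f i}[x]` contains a monic polynomial, then `I` contains a monic
polynomial. -/
theorem monic_mem_of_locally_monic (R : Type u) [CommRing R] (r : ℕ) (f : Fin r → R)
    (hf : Ideal.span (Set.range f) = ⊤)
    (I : Ideal (Polynomial R))
    (h : ∀ i : Fin r,
      ∃ q ∈ I.map (Polynomial.mapRingHom (algebraMap R (Localization.Away (f i)))), q.Monic) :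
    ∃ q ∈ I, q.Monic := by
  choose d k p hpI hdeg hcoeff using fun i => exists_coeff_pow (f i) I (h i)
  set D := Finset.univ.sup d with hD
  have hdD : ∀ i, d i ≤ D := fun i => Finset.le_sup (Finset.mem_univ i)
  have hJ : Ideal.span (Set.range fun i => f i ^ k i) = ⊤ := by
    rw [← Ideal.radical_eq_top, eq_top_iff, ← hf, Ideal.span_le]
    rintro x ⟨i, rfl⟩
    exact Ideal.mem_radical_iff.mpr ⟨k i, Ideal.subset_span ⟨i, rfl⟩⟩
  have h1 : (1 : R) ∈ Ideal.span (Set.range fun i => f i ^ k i) := hJ ▸ Submodule.mem_top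
  have h1' : (1 : R) ∈ Submodule.span R (Set.range fun i => f i ^ k i) := h1
  rw [Submodule.mem_span_range_iff_exists_fun] at h1'
  obtain ⟨cc, hcc⟩ := h1'
  simp only [smul_eq_mul] at hcc
  refine ⟨∑ i, Polynomial.C (cc i) * (p i * Polynomial.X ^ (D - d i)), ?_, ?_⟩
  · exact Ideal.sum_mem _ fun i _ => I.mul_mem_left _ (I.mul_mem_right _ (hpI i))
  · apply Polynomial.monic_of_natDegree_le_of_coeff_eq_one D
    · apply Polynomial.natDegree_sum_le_of_forall_le
      intro i _
      refine (Polynomial.natDegree_mul_le).trans ?_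
      rw [Polynomial.natDegree_C, zero_add]
      have h0 : (Polynomial.X (R := R) ^ (D - d i)).natDegree ≤ D - d i :=
        Polynomial.natDegree_X_pow_le _
      have h1 := hdeg i
      have h2 := hdD i
      have h3 := Polynomial.natDegree_mul_le (p := p i) (q := Polynomial.X (R := R) ^ (D - d i))
      omega
    · rw [Polynomial.finset_sum_coeff]
      have key : ∀ i : Fin r,
          (Polynomial.C (cc i) * (p i * Polynomial.X ^ (D - d i))).coeff D
            = cc i * f i ^ k i := by
        intro i
        rw [Polynomial.coeff_C_mul, Polynomial.coeff_mul_X_pow', if_pos (Nat.sub_le D (d i)),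
          Nat.sub_sub_self (hdD i), hcoeff i]
      rw [Finset.sum_congr rfl (fun i _ => key i), hcc]
end

section
/- Let A be a commutative ring, n ≥ 1 an integer, and X a scheme admitting an immersion into projective n-space ℙⁿ_A over A; that is, X is isomorphic to a closed subscheme of an open subscheme of ℙⁿ_A. Then every finite set of points of X is contained in an affine open subscheme of X. -/
open AlgebraicGeometry CategoryTheory

attribute [local instance] MvPolynomial.gradedAlgebra

universe u

section Avoidance

open DirectSum

variable {R A : Type*} [CommRing R] [CommRing A] [Algebra R A]
variable (𝒜 : ℕ → Submodule R A) [GradedAlgebra 𝒜]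

lemma exists_homogeneous_mem_not_mem {I P : Ideal A}
    (hI : I.IsHomogeneous 𝒜) (hP : P.IsHomogeneous 𝒜) (h : ¬ I ≤ P) :
    ∃ (i : ℕ) (a : A), a ∈ 𝒜 i ∧ a ∈ I ∧ a ∉ P := by
  rw [SetLike.le_def] at h
  push_neg at h
  obtain ⟨a, haI, haP⟩ := h
  by_contra hcon
  push_neg at hcon
  refine haP ((hP.mem_iff 𝒜).mpr fun i => ?_)
  by_contra hi
  exact hi (hcon i _ (SetLike.coe_mem _) (hI i haI))

lemma projspec_exists_pos_not_mem (x : ProjectiveSpectrum 𝒜) :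
    ∃ (m : ℕ) (c : A), 0 < m ∧ c ∈ 𝒜 m ∧ c ∉ x.asHomogeneousIdeal := by
  have h : ¬ (HomogeneousIdeal.irrelevant 𝒜).toIdeal ≤ x.asHomogeneousIdeal.toIdeal :=
    fun hle => x.not_irrelevant_le fun a ha => hle ha
  obtain ⟨i, c, hci, hcirr, hcx⟩ := exists_homogeneous_mem_not_mem 𝒜
    (HomogeneousIdeal.irrelevant 𝒜).isHomogeneous x.asHomogeneousIdeal.isHomogeneous h
  refine ⟨i, c, ?_, hci, hcx⟩
  rcases Nat.eq_zero_or_pos i with rfl | hi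
  · exfalso
    have h0 : GradedRing.proj 𝒜 0 c = 0 := hcirr
    rw [GradedRing.proj_apply, DirectSum.decompose_of_mem_same 𝒜 hci] at h0
    exact hcx (h0 ▸ x.asHomogeneousIdeal.toIdeal.zero_mem)
  · exact hi

lemma homogeneous_prime_avoidance (T : Finset (ProjectiveSpectrum 𝒜)) (hT : T.Nonempty)
    (I : HomogeneousIdeal 𝒜)
    (hIT : ∀ x ∈ T, ¬ I.toIdeal ≤ x.asHomogeneousIdeal.toIdeal) :
    ∃ (m : ℕ) (f : A), 0 < m ∧ f ∈ 𝒜 m ∧ f ∈ I.toIdeal ∧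
      ∀ x ∈ T, f ∉ x.asHomogeneousIdeal := by
  classical
  set M : Finset (ProjectiveSpectrum 𝒜) :=
    T.filter (fun x => ∀ y ∈ T,
      x.asHomogeneousIdeal.toIdeal ≤ y.asHomogeneousIdeal.toIdeal → x = y) with hM
  have hmax : ∀ x ∈ T, ∃ y ∈ M,
      x.asHomogeneousIdeal.toIdeal ≤ y.asHomogeneousIdeal.toIdeal := by
    intro x hx
    obtain ⟨y, hy, hymax⟩ := Set.Finite.exists_maximalFor
      (fun z : ProjectiveSpectrum 𝒜 => z.asHomogeneousIdeal.toIdeal)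
      {z | z ∈ T ∧ x.asHomogeneousIdeal.toIdeal ≤ z.asHomogeneousIdeal.toIdeal}
      (T.finite_toSet.subset (fun z hz => hz.1)) ⟨x, hx, le_rfl⟩
    refine ⟨y, ?_, hy.2⟩
    rw [hM, Finset.mem_filter]
    refine ⟨hy.1, fun z hz hle => ?_⟩
    have hzmem : z ∈ {z | z ∈ T ∧
        x.asHomogeneousIdeal.toIdeal ≤ z.asHomogeneousIdeal.toIdeal} := ⟨hz, hy.2.trans hle⟩
    exact ProjectiveSpectrum.ext (HomogeneousIdeal.toIdeal_injective (le_antisymm hle (hymax hzmem hle)))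
  have hMT : M ⊆ T := Finset.filter_subset _ _
  have key : ∀ x ∈ M, ∃ (e : ℕ) (c : A), 0 < e ∧ c ∈ 𝒜 e ∧ c ∈ I.toIdeal ∧
      c ∈ (∏ y ∈ M.erase x, y.asHomogeneousIdeal.toIdeal) ∧ c ∉ x.asHomogeneousIdeal := by
    intro x hx
    have hprodhom : (∏ y ∈ M.erase x, y.asHomogeneousIdeal.toIdeal).IsHomogeneous 𝒜 := by
      refine Finset.prod_induction _ _ (fun a b ha hb => ha.mul hb) ?_
        (fun y _ => y.asHomogeneousIdeal.isHomogeneous)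
      rw [Ideal.one_eq_top]
      exact Ideal.IsHomogeneous.top 𝒜
    have hJhom := I.isHomogeneous.mul hprodhom
    have hJle : ¬ I.toIdeal * (∏ y ∈ M.erase x, y.asHomogeneousIdeal.toIdeal) ≤
        x.asHomogeneousIdeal.toIdeal := by
      rw [x.isPrime.mul_le]
      rintro (h | h)
      · exact hIT x (hMT hx) h
      · rw [Ideal.IsPrime.prod_le x.isPrime] at h
        obtain ⟨y, hy, hyle⟩ := h
        have hyM := Finset.mem_of_mem_erase hy
        rw [hM, Finset.mem_filter] at hyM
        exact (Finset.ne_of_mem_erase hy) (hyM.2 x (hMT hx) hyle)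
    obtain ⟨i, a, hai, haJ, hax⟩ := exists_homogeneous_mem_not_mem 𝒜 hJhom
      x.asHomogeneousIdeal.isHomogeneous hJle
    obtain ⟨m, c, hm, hcm, hcx⟩ := projspec_exists_pos_not_mem 𝒜 x
    refine ⟨i + m, a * c, Nat.add_pos_right _ hm, SetLike.mul_mem_graded hai hcm,
      Ideal.mul_mem_right _ _ (Ideal.mul_le_left haJ),
      Ideal.mul_mem_right _ _ (Ideal.mul_le_right haJ),
      fun h => (x.isPrime.mem_or_mem h).elim hax hcx⟩
  choose e c he hc hcI hcP hcx using key
  have hMne : M.Nonempty := by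
    obtain ⟨x, hx⟩ := hT
    obtain ⟨y, hy, -⟩ := hmax x hx
    exact ⟨y, hy⟩
  set D : ℕ := ∏ x ∈ M.attach, e x.1 x.2 with hD
  have hDpos : 0 < D := Finset.prod_pos (fun x _ => he x.1 x.2)
  have hdvd : ∀ (x) (hx : x ∈ M), e x hx ∣ D :=
    fun x hx => Finset.dvd_prod_of_mem _ (Finset.mem_attach _ ⟨x, hx⟩)
  have hkpos : ∀ (x) (hx : x ∈ M), 0 < D / e x hx := fun x hx =>
    Nat.div_pos (Nat.le_of_dvd hDpos (hdvd x hx)) (he x hx)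
  set F : A := ∑ x ∈ M.attach, (c x.1 x.2) ^ (D / e x.1 x.2) with hF
  have hterm : ∀ (x) (hx : x ∈ M), (c x hx) ^ (D / e x hx) ∈ 𝒜 D := by
    intro x hx
    have := SetLike.pow_mem_graded (D / e x hx) (hc x hx)
    rwa [smul_eq_mul, Nat.div_mul_cancel (hdvd x hx)] at this
  refine ⟨D, F, hDpos, Submodule.sum_mem _ (fun x _ => hterm x.1 x.2),
    Ideal.sum_mem _ (fun x _ => Ideal.pow_mem_of_mem _ (hcI x.1 x.2) _ (hkpos x.1 x.2)), ?_⟩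
  intro x hxT hxF
  obtain ⟨y, hyM, hle⟩ := hmax x hxT
  have hyF : F ∈ y.asHomogeneousIdeal.toIdeal := hle hxF
  have hrest : ∑ z ∈ M.attach.erase ⟨y, hyM⟩, (c z.1 z.2) ^ (D / e z.1 z.2) ∈
      y.asHomogeneousIdeal.toIdeal := by
    refine Ideal.sum_mem _ (fun z hz => ?_)
    have hzy : y ≠ z.1 := fun h => (Finset.ne_of_mem_erase hz) (Subtype.ext h.symm)
    have hcz : c z.1 z.2 ∈ y.asHomogeneousIdeal.toIdeal :=
      (Ideal.prod_le_inf.trans (Finset.inf_le (Finset.mem_erase.mpr ⟨hzy, hyM⟩))) (hcP z.1 z.2)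
    exact Ideal.pow_mem_of_mem _ hcz _ (hkpos z.1 z.2)
  have hcy : (c y hyM) ^ (D / e y hyM) ∈ y.asHomogeneousIdeal.toIdeal := by
    have hsum := Finset.sum_erase_add M.attach
      (fun z => (c z.1 z.2) ^ (D / e z.1 z.2)) (Finset.mem_attach _ ⟨y, hyM⟩)
    have heq : (c y hyM) ^ (D / e y hyM) =
        F - ∑ z ∈ M.attach.erase ⟨y, hyM⟩, (c z.1 z.2) ^ (D / e z.1 z.2) := by
      rw [hF, ← hsum]; ring
    rw [heq]
    exact Ideal.sub_mem _ hyF hrest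
  exact hcx y hyM (y.isPrime.mem_of_pow_mem _ hcy)

end Avoidance

/-- Let `A` be a commutative ring and `X` a scheme admitting an immersion into projective
`n`-space `ℙⁿ_A = Proj A[x₀, …, xₙ]`, i.e. `X` is (isomorphic to) a closed subscheme of an open
subscheme of `ℙⁿ_A`.  Then every finite set of points of `X` is contained in an affine open
subscheme of `X`. -/
theorem finite_set_subset_affine_open_of_quasiProjective
    (A : Type u) [CommRing A] (n : ℕ) (X : Scheme.{u})
    (U : (Proj (MvPolynomial.homogeneousSubmodule (Fin (n + 1)) A)).Opens)
    (g : X ⟶ U.toScheme) [IsClosedImmersion g]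
    (s : Set X) (hs : s.Finite) :
    ∃ V : X.Opens, IsAffineOpen V ∧ s ⊆ (V : Set X) := by
  classical
  rcases s.eq_empty_or_nonempty with rfl | hne
  · exact ⟨⊥, isAffineOpen_bot X, by simp⟩
  set 𝒜 := MvPolynomial.homogeneousSubmodule (Fin (n + 1)) A with h𝒜
  set t : Set (ProjectiveSpectrum 𝒜) := U.ι.base '' (g.base '' s) with ht
  have htfin : t.Finite := (hs.image _).image _
  set T : Finset (ProjectiveSpectrum 𝒜) := htfin.toFinset with hT
  have hTne : T.Nonempty := by
    obtain ⟨p, hp⟩ := hne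
    exact ⟨_, htfin.mem_toFinset.mpr ⟨g.base p, ⟨p, hp, rfl⟩, rfl⟩⟩
  set I := ProjectiveSpectrum.vanishingIdeal ((U : Set (Proj 𝒜))ᶜ) with hI
  have hIx : ∀ x ∈ T, ¬ I.toIdeal ≤ x.asHomogeneousIdeal.toIdeal := by
    intro x hxT hle
    have hxU : x ∈ (U : Set (Proj 𝒜)) := by
      have := htfin.mem_toFinset.mp hxT
      obtain ⟨w, -, rfl⟩ := this
      exact Scheme.Opens.range_ι U ▸ Set.mem_range_self w
    have hxZ : x ∈ ProjectiveSpectrum.zeroLocus 𝒜 (I : Set _) := fun a ha => hle ha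
    rw [hI, ProjectiveSpectrum.zeroLocus_vanishingIdeal_eq_closure] at hxZ
    exact (U.2.isClosed_compl.closure_subset hxZ) hxU
  obtain ⟨m, f, hm, hfm, hfI, hfT⟩ := homogeneous_prime_avoidance 𝒜 T hTne I hIx
  have hbU : Proj.basicOpen 𝒜 f ≤ U := by
    intro z hz
    by_contra hzU
    exact hz ((ProjectiveSpectrum.mem_vanishingIdeal _ _).mp hfI z hzU)
  have haff : IsAffineOpen (Proj.basicOpen 𝒜 f) := Proj.isAffineOpen_basicOpen 𝒜 f hfm hm
  have himg : U.ι ''ᵁ (U.ι ⁻¹ᵁ Proj.basicOpen 𝒜 f) = Proj.basicOpen 𝒜 f := by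
    rw [U.ι.image_preimage_eq_opensRange_inf, Scheme.Opens.opensRange_ι]
    exact inf_eq_right.mpr hbU
  have hW : IsAffineOpen (U.ι ⁻¹ᵁ Proj.basicOpen 𝒜 f) := by
    rw [← U.ι.isAffineOpen_iff_of_isOpenImmersion, himg]
    exact haff
  refine ⟨g ⁻¹ᵁ (U.ι ⁻¹ᵁ Proj.basicOpen 𝒜 f), hW.preimage g, ?_⟩
  intro p hp
  have hmem : U.ι.base (g.base p) ∈ t := ⟨g.base p, ⟨p, hp, rfl⟩, rfl⟩
  exact hfT _ (htfin.mem_toFinset.mpr hmem)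
end
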